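/- arXiv:2601.19284 — 5 statements merged into one kernel-verified Lean document; each statement's English description precedes it below -/
import Mathlib

section
/- Let γ ∈ (0,1], K ∈ S_γ with J_γ(K) > ℓ₀, and set α = ℓ₀/(J_γ(K) − ℓ₀). If γ' > 0 satisfies γ' < (1 + α)·γ, then √γ'·ρ(A − BKC) < 1, i.e., K ∈ S_{γ'} whenever moreover γ' ≤ 1. -/
open Matrix

noncomputable section

/-- Spectral radius of a real square matrix: the largest modulus of a complex eigenvalue. -/
def specRad {n : ℕ} (M : Matrix (Fin n) (Fin n) ℝ) : ℝ :=
  sSup {r : ℝ | ∃ μ ∈ spectrum ℂ (M.map (algebraMap ℝ ℂ)), r = ‖μ‖}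

/-- Spectral (ℓ²→ℓ² operator) norm of a real matrix. -/
def spNorm {a b : ℕ} (M : Matrix (Fin a) (Fin b) ℝ) : ℝ :=
  ‖LinearMap.toContinuousLinearMap (Matrix.toEuclideanLin M)‖

/-- Frobenius norm of a real matrix. -/
def frobNorm {a b : ℕ} (M : Matrix (Fin a) (Fin b) ℝ) : ℝ :=
  Real.sqrt (∑ i, ∑ j, (M i j) ^ 2)

/-- Euclidean norm of a vector. -/
def vecNorm {a : ℕ} (x : Fin a → ℝ) : ℝ :=
  Real.sqrt (∑ i, (x i) ^ 2)

variable {n m p : ℕ}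

/-- Closed-loop matrix `A - BKC`. -/
def Acl (A : Matrix (Fin n) (Fin n) ℝ) (B : Matrix (Fin n) (Fin m) ℝ)
    (C : Matrix (Fin p) (Fin n) ℝ) (K : Matrix (Fin m) (Fin p) ℝ) : Matrix (Fin n) (Fin n) ℝ :=
  A - B * K * C

/-- Membership in the stabilizing set `S_γ`: `√γ · ρ(A − BKC) < 1`. -/
def inS (A : Matrix (Fin n) (Fin n) ℝ) (B : Matrix (Fin n) (Fin m) ℝ)
    (C : Matrix (Fin p) (Fin n) ℝ) (γ : ℝ) (K : Matrix (Fin m) (Fin p) ℝ) : Prop :=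
  Real.sqrt γ * specRad (Acl A B C K) < 1

/-- The solution `P_K(γ) = Σ_{t} γ^t ((A−BKC)ᵀ)^t (Q + CᵀKᵀRKC) (A−BKC)^t` of the
discounted Lyapunov equation. -/
def Pmat (A : Matrix (Fin n) (Fin n) ℝ) (B : Matrix (Fin n) (Fin m) ℝ)
    (C : Matrix (Fin p) (Fin n) ℝ) (Q : Matrix (Fin n) (Fin n) ℝ) (R : Matrix (Fin m) (Fin m) ℝ)
    (γ : ℝ) (K : Matrix (Fin m) (Fin p) ℝ) : Matrix (Fin n) (Fin n) ℝ :=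
  ∑' t : ℕ, γ ^ t • ((Acl A B C K)ᵀ ^ t * (Q + Cᵀ * Kᵀ * R * K * C) * (Acl A B C K) ^ t)

/-- The Gramian `Σ_K(γ) = Σ_{t} γ^t (A−BKC)^t ((A−BKC)ᵀ)^t`. -/
def Smat (A : Matrix (Fin n) (Fin n) ℝ) (B : Matrix (Fin n) (Fin m) ℝ)
    (C : Matrix (Fin p) (Fin n) ℝ) (γ : ℝ) (K : Matrix (Fin m) (Fin p) ℝ) :
    Matrix (Fin n) (Fin n) ℝ :=
  ∑' t : ℕ, γ ^ t • ((Acl A B C K) ^ t * ((Acl A B C K)ᵀ) ^ t)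

/-- The discounted cost `J_γ(K) = Tr(P_K(γ))`. -/
def Jcost (A : Matrix (Fin n) (Fin n) ℝ) (B : Matrix (Fin n) (Fin m) ℝ)
    (C : Matrix (Fin p) (Fin n) ℝ) (Q : Matrix (Fin n) (Fin n) ℝ) (R : Matrix (Fin m) (Fin m) ℝ)
    (γ : ℝ) (K : Matrix (Fin m) (Fin p) ℝ) : ℝ :=
  (Pmat A B C Q R γ K).trace

/-- `E_K = (R + γBᵀP_K(γ)B)KC − γBᵀP_K(γ)A`. -/
def Egrad (A : Matrix (Fin n) (Fin n) ℝ) (B : Matrix (Fin n) (Fin m) ℝ)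
    (C : Matrix (Fin p) (Fin n) ℝ) (Q : Matrix (Fin n) (Fin n) ℝ) (R : Matrix (Fin m) (Fin m) ℝ)
    (γ : ℝ) (K : Matrix (Fin m) (Fin p) ℝ) : Matrix (Fin m) (Fin n) ℝ :=
  (R + γ • (Bᵀ * Pmat A B C Q R γ K * B)) * K * C - γ • (Bᵀ * Pmat A B C Q R γ K * A)

/-- The closed-form gradient `∇J_γ(K) = 2 E_K Σ_K(γ) Cᵀ`. -/
def gradJ (A : Matrix (Fin n) (Fin n) ℝ) (B : Matrix (Fin n) (Fin m) ℝ)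
    (C : Matrix (Fin p) (Fin n) ℝ) (Q : Matrix (Fin n) (Fin n) ℝ) (R : Matrix (Fin m) (Fin m) ℝ)
    (γ : ℝ) (K : Matrix (Fin m) (Fin p) ℝ) : Matrix (Fin m) (Fin p) ℝ :=
  (2 : ℝ) • (Egrad A B C Q R γ K * Smat A B C γ K * Cᵀ)

end

section Aux

open Matrix

/-- Cauchy–Schwarz bound for an eigenvalue of (the complexification of) a real matrix. -/
lemma eig_sq_le {n : ℕ} (N : Matrix (Fin n) (Fin n) ℝ) {μ : ℂ} {v : Fin n → ℂ}
    (hv : v ≠ 0) (h : (N.map (algebraMap ℝ ℂ)).mulVec v = μ • v) :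
    ‖μ‖ ^ 2 ≤ ∑ i, ∑ j, (N i j) ^ 2 := by
  set s : ℝ := ∑ j, ‖v j‖ ^ 2 with hs
  have hspos : 0 < s := by
    obtain ⟨j, hj⟩ := Function.ne_iff.mp hv
    refine Finset.sum_pos' (fun _ _ => sq_nonneg _) ⟨j, Finset.mem_univ j, pow_pos (norm_pos_iff.mpr hj) 2⟩
  have key : ∀ i, ‖((N.map (algebraMap ℝ ℂ)).mulVec v) i‖ ^ 2 ≤ (∑ j, (N i j) ^ 2) * s := by
    intro i
    have h1 : ‖((N.map (algebraMap ℝ ℂ)).mulVec v) i‖ ≤ ∑ j, |N i j| * ‖v j‖ := by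
      have : ((N.map (algebraMap ℝ ℂ)).mulVec v) i = ∑ j, (N i j : ℂ) * v j := by
        simp [Matrix.mulVec, dotProduct, Matrix.map_apply]
      rw [this]
      calc ‖∑ j, (N i j : ℂ) * v j‖ ≤ ∑ j, ‖(N i j : ℂ) * v j‖ := norm_sum_le _ _
        _ = ∑ j, |N i j| * ‖v j‖ := by simp [norm_mul]
    calc ‖((N.map (algebraMap ℝ ℂ)).mulVec v) i‖ ^ 2
        ≤ (∑ j, |N i j| * ‖v j‖) ^ 2 := by
          have h0 : (0:ℝ) ≤ ‖((N.map (algebraMap ℝ ℂ)).mulVec v) i‖ := norm_nonneg _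
          nlinarith [h1, h0, Finset.sum_nonneg (fun j (_ : j ∈ Finset.univ) =>
            mul_nonneg (abs_nonneg (N i j)) (norm_nonneg (v j)))]
      _ ≤ (∑ j, |N i j| ^ 2) * (∑ j, ‖v j‖ ^ 2) := Finset.sum_mul_sq_le_sq_mul_sq _ _ _
      _ = (∑ j, (N i j) ^ 2) * s := by simp [sq_abs, hs]
  have main : ‖μ‖ ^ 2 * s ≤ (∑ i, ∑ j, (N i j) ^ 2) * s := by
    have lhs : ∑ i, ‖(μ • v) i‖ ^ 2 = ‖μ‖ ^ 2 * s := by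
      simp [norm_smul, mul_pow, Finset.mul_sum, hs]
    calc ‖μ‖ ^ 2 * s = ∑ i, ‖((N.map (algebraMap ℝ ℂ)).mulVec v) i‖ ^ 2 := by
          rw [h, lhs]
      _ ≤ ∑ i, (∑ j, (N i j) ^ 2) * s := Finset.sum_le_sum fun i _ => key i
      _ = (∑ i, ∑ j, (N i j) ^ 2) * s := by rw [← Finset.sum_mul]
  exact le_of_mul_le_mul_right main hspos

lemma specRad_eq_image {n : ℕ} (M : Matrix (Fin n) (Fin n) ℝ) :
    specRad M = sSup ((fun μ : ℂ => ‖μ‖) '' spectrum ℂ (M.map (algebraMap ℝ ℂ))) := by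
  unfold specRad
  congr 1
  ext r
  simp [Set.mem_image, eq_comm]

/-- For `n ≥ 1`, the spectral radius is attained at some eigenvalue with an eigenvector. -/
lemma exists_max_eigen {n : ℕ} (hn : 1 ≤ n) (N : Matrix (Fin n) (Fin n) ℝ) :
    ∃ (μ : ℂ) (v : Fin n → ℂ), v ≠ 0 ∧ (N.map (algebraMap ℝ ℂ)).mulVec v = μ • v ∧
      specRad N = ‖μ‖ := by
  haveI : NeZero n := ⟨Nat.one_le_iff_ne_zero.mp hn⟩
  haveI : Nontrivial (Matrix (Fin n) (Fin n) ℂ) := by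
    refine ⟨0, 1, fun hc => ?_⟩
    have := congrFun (congrFun hc ⟨0, hn⟩) ⟨0, hn⟩
    simp [Matrix.one_apply] at this
  set Nc := N.map (algebraMap ℝ ℂ) with hNc
  have hne : (spectrum ℂ Nc).Nonempty :=
    spectrum.nonempty_of_isAlgClosed_of_finiteDimensional ℂ Nc
  have hfin : ((fun μ : ℂ => ‖μ‖) '' spectrum ℂ Nc).Finite :=
    (Matrix.finite_spectrum Nc).image _
  have hmem : sSup ((fun μ : ℂ => ‖μ‖) '' spectrum ℂ Nc)
      ∈ (fun μ : ℂ => ‖μ‖) '' spectrum ℂ Nc := (hne.image _).csSup_mem hfin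
  obtain ⟨μ, hμ, hμr⟩ := hmem
  rw [← AlgEquiv.spectrum_eq (Matrix.toLinAlgEquiv' (R := ℂ) (n := Fin n))] at hμ
  have hev : Module.End.HasEigenvalue (Matrix.toLinAlgEquiv' Nc) μ :=
    Module.End.hasEigenvalue_iff_mem_spectrum.mpr hμ
  obtain ⟨v, hv⟩ := hev.exists_hasEigenvector
  refine ⟨μ, v, hv.right, ?_, by rw [specRad_eq_image, ← hμr]⟩
  have := hv.apply_eq_smul
  simpa using this

lemma mulVec_pow_eigen {n : ℕ} {N : Matrix (Fin n) (Fin n) ℂ} {μ : ℂ} {v : Fin n → ℂ}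
    (h : N.mulVec v = μ • v) (t : ℕ) : (N ^ t).mulVec v = (μ ^ t) • v := by
  induction t with
  | zero => simp
  | succ t ih =>
      rw [pow_succ', ← Matrix.mulVec_mulVec, ih, Matrix.mulVec_smul, h, smul_smul, ← pow_succ]

lemma specRad_sq_pow_le {n : ℕ} (hn : 1 ≤ n) (N : Matrix (Fin n) (Fin n) ℝ) (t : ℕ) :
    (specRad N ^ 2) ^ t ≤ ∑ i, ∑ j, ((N ^ t) i j) ^ 2 := by
  obtain ⟨μ, v, hv, heig, hρ⟩ := exists_max_eigen hn N
  have hmap : (N ^ t).map (algebraMap ℝ ℂ) = (N.map (algebraMap ℝ ℂ)) ^ t := by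
    have := map_pow ((algebraMap ℝ ℂ).mapMatrix) N t
    simpa [RingHom.mapMatrix_apply] using this
  have heigt : ((N ^ t).map (algebraMap ℝ ℂ)).mulVec v = (μ ^ t) • v := by
    rw [hmap]; exact mulVec_pow_eigen heig t
  have hb := eig_sq_le (N ^ t) hv heigt
  calc (specRad N ^ 2) ^ t = ‖μ ^ t‖ ^ 2 := by
        rw [hρ, norm_pow]; ring
    _ ≤ ∑ i, ∑ j, ((N ^ t) i j) ^ 2 := hb

lemma psd_smul_one {k : ℕ} {c : ℝ} (hc : 0 ≤ c) :
    (c • (1 : Matrix (Fin k) (Fin k) ℝ)).PosSemidef := by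
  exact Matrix.PosSemidef.one.smul hc

lemma psd_trace_nonneg {k : ℕ} {P : Matrix (Fin k) (Fin k) ℝ} (h : P.PosSemidef) :
    0 ≤ P.trace := by
  have hd : ∀ i, 0 ≤ P i i := by
    intro i
    exact h.diag_nonneg
  exact Finset.sum_nonneg fun i _ => hd i

end Aux

/-- if `γ' < (1 + α)γ` with `α = ℓ₀/(J_γ(K) − ℓ₀)` then
`√γ'·ρ(A − BKC) < 1`. -/
theorem stmt7
    {n m p : ℕ} (hn : 1 ≤ n) (hm : 1 ≤ m) (hp : 1 ≤ p)
    (A : Matrix (Fin n) (Fin n) ℝ) (B : Matrix (Fin n) (Fin m) ℝ) (C : Matrix (Fin p) (Fin n) ℝ)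
    (Q : Matrix (Fin n) (Fin n) ℝ) (R : Matrix (Fin m) (Fin m) ℝ)
    (hQsymm : Q.IsSymm) (hRsymm : R.IsSymm)
    (ℓ₀ ℓ₁ ψ φ : ℝ) (hℓ₀ : 0 < ℓ₀) (hℓ₀₁ : ℓ₀ ≤ ℓ₁) (hψ : 1 ≤ ψ) (hφ : 1 ≤ φ)
    (hQlb : (Q - ℓ₀ • (1 : Matrix (Fin n) (Fin n) ℝ)).PosSemidef)
    (hQub : (ℓ₁ • (1 : Matrix (Fin n) (Fin n) ℝ) - Q).PosSemidef)
    (hRlb : (R - ℓ₀ • (1 : Matrix (Fin m) (Fin m) ℝ)).PosSemidef)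
    (hRub : (ℓ₁ • (1 : Matrix (Fin m) (Fin m) ℝ) - R).PosSemidef)
    (hB : spNorm B ≤ ψ) (hC : spNorm C ≤ φ)
    (γ : ℝ) (hγ : γ ∈ Set.Ioc (0 : ℝ) 1)
    (K : Matrix (Fin m) (Fin p) ℝ) (hK : inS A B C γ K)
    (hJ : ℓ₀ < Jcost A B C Q R γ K)
    (γ' : ℝ) (hγ'pos : 0 < γ')
    (hγ'lt : γ' < (1 + ℓ₀ / (Jcost A B C Q R γ K - ℓ₀)) * γ) :
    Real.sqrt γ' * specRad (Acl A B C K) < 1 := by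
  obtain ⟨hγ0, hγ1⟩ := hγ
  have hKlt : Real.sqrt γ * specRad (Acl A B C K) < 1 := hK
  set Ac := Acl A B C K with hAcdef
  set ρ := specRad Ac with hρdef
  have hρ0 : 0 ≤ ρ := by
    obtain ⟨μ, v, -, -, h⟩ := exists_max_eigen hn Ac
    rw [hρdef, h]; positivity
  set J := Jcost A B C Q R γ K with hJdef
  have hJpos : 0 < J := hℓ₀.trans hJ
  have hq1 : γ * ρ ^ 2 < 1 := by
    have h2 : (Real.sqrt γ * ρ) ^ 2 < 1 :=
      pow_lt_one₀ (mul_nonneg (Real.sqrt_nonneg _) hρ0) hKlt two_ne_zero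
    rwa [mul_pow, Real.sq_sqrt hγ0.le] at h2
  have hq0 : 0 ≤ γ * ρ ^ 2 := by positivity
  set M := Q + Cᵀ * Kᵀ * R * K * C with hMdef
  have hRpsd : R.PosSemidef := by
    have h := hRlb.add (psd_smul_one (k := m) hℓ₀.le)
    simpa using h
  have hMpsd : (M - ℓ₀ • (1 : Matrix (Fin n) (Fin n) ℝ)).PosSemidef := by
    have h1 : ((K * C)ᴴ * R * (K * C)).PosSemidef := hRpsd.conjTranspose_mul_mul_same (K * C)
    have h2 : (K * C)ᴴ = Cᵀ * Kᵀ := by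
      rw [Matrix.conjTranspose_eq_transpose_of_trivial, Matrix.transpose_mul]
    rw [h2, ← Matrix.mul_assoc] at h1
    have h3 : M - ℓ₀ • (1 : Matrix (Fin n) (Fin n) ℝ) =
        (Q - ℓ₀ • (1 : Matrix (Fin n) (Fin n) ℝ)) + Cᵀ * Kᵀ * R * K * C := by
      rw [hMdef]; abel
    rw [h3]
    exact hQlb.add h1
  set f : ℕ → Matrix (Fin n) (Fin n) ℝ :=
    fun t => γ ^ t • ((Acᵀ) ^ t * M * Ac ^ t) with hfdef
  have hJeq : J = Matrix.trace (∑' t, f t) := rfl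
  by_cases hsum : Summable f
  case neg =>
    exfalso
    rw [hJeq, tsum_eq_zero_of_not_summable hsum, Matrix.trace_zero] at hJpos
    exact lt_irrefl _ hJpos
  -- trace is continuous
  have hTcont : Continuous (Matrix.traceLinearMap (Fin n) ℝ ℝ) :=
    LinearMap.continuous_of_finiteDimensional _
  have hhs : HasSum (fun t => (f t).trace) ((∑' t, f t).trace) :=
    hsum.hasSum.map (Matrix.traceLinearMap (Fin n) ℝ ℝ) hTcont
  have hJg : J = ∑' t, (f t).trace := by rw [hJeq, ← hhs.tsum_eq]
  have hgsum : Summable fun t => (f t).trace := hhs.summable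
  -- termwise lower bound
  have hterm : ∀ t, ℓ₀ * (γ * ρ ^ 2) ^ t ≤ (f t).trace := by
    intro t
    have htr : (f t).trace = γ ^ t * Matrix.trace ((Acᵀ) ^ t * M * Ac ^ t) := by
      rw [hfdef]; simp [Matrix.trace_smul]
    -- the conjugated PSD part
    have hconj : (((Ac ^ t)ᴴ) * (M - ℓ₀ • (1 : Matrix (Fin n) (Fin n) ℝ)) * Ac ^ t).PosSemidef :=
      hMpsd.conjTranspose_mul_mul_same (Ac ^ t)
    have hct : (Ac ^ t)ᴴ = (Acᵀ) ^ t := by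
      rw [Matrix.conjTranspose_eq_transpose_of_trivial, Matrix.transpose_pow]
    rw [hct] at hconj
    have hpsd := psd_trace_nonneg hconj
    have hsub : Matrix.trace ((Acᵀ) ^ t * (M - ℓ₀ • (1 : Matrix (Fin n) (Fin n) ℝ)) * Ac ^ t)
        = Matrix.trace ((Acᵀ) ^ t * M * Ac ^ t)
          - ℓ₀ * Matrix.trace ((Acᵀ) ^ t * Ac ^ t) := by
      rw [mul_sub, sub_mul, Matrix.trace_sub, mul_smul_comm, smul_mul_assoc, mul_one,
        Matrix.trace_smul]
      simp [smul_eq_mul]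
    have hmid : ℓ₀ * Matrix.trace ((Acᵀ) ^ t * Ac ^ t)
        ≤ Matrix.trace ((Acᵀ) ^ t * M * Ac ^ t) := by
      rw [hsub] at hpsd; linarith
    have htr2 : Matrix.trace ((Acᵀ) ^ t * Ac ^ t) = ∑ i, ∑ j, ((Ac ^ t) i j) ^ 2 := by
      rw [← Matrix.transpose_pow]
      simp only [Matrix.trace, Matrix.diag, Matrix.mul_apply, Matrix.transpose_apply]
      rw [Finset.sum_comm]
      simp [sq]
    have hspec : (ρ ^ 2) ^ t ≤ Matrix.trace ((Acᵀ) ^ t * Ac ^ t) := by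
      rw [htr2, hρdef]; exact specRad_sq_pow_le hn Ac t
    have hγt : (0:ℝ) ≤ γ ^ t := by positivity
    calc ℓ₀ * (γ * ρ ^ 2) ^ t = γ ^ t * (ℓ₀ * (ρ ^ 2) ^ t) := by ring
      _ ≤ γ ^ t * (ℓ₀ * Matrix.trace ((Acᵀ) ^ t * Ac ^ t)) := by
          apply mul_le_mul_of_nonneg_left _ hγt
          exact mul_le_mul_of_nonneg_left hspec hℓ₀.le
      _ ≤ γ ^ t * Matrix.trace ((Acᵀ) ^ t * M * Ac ^ t) := by
          exact mul_le_mul_of_nonneg_left hmid hγt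
      _ = (f t).trace := htr.symm
  have hgnn : ∀ t, 0 ≤ (f t).trace := fun t => le_trans (by positivity) (hterm t)
  have hgeom : HasSum (fun t => ℓ₀ * (γ * ρ ^ 2) ^ t) (ℓ₀ * (1 - γ * ρ ^ 2)⁻¹) :=
    (hasSum_geometric_of_lt_one hq0 hq1).mul_left ℓ₀
  have hkey : ℓ₀ * (1 - γ * ρ ^ 2)⁻¹ ≤ J := by
    rw [hJg]
    calc ℓ₀ * (1 - γ * ρ ^ 2)⁻¹ = ∑' t, ℓ₀ * (γ * ρ ^ 2) ^ t := hgeom.tsum_eq.symm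
      _ ≤ ∑' t, (f t).trace := Summable.tsum_le_tsum hterm hgeom.summable hgsum
  have h1q : 0 < 1 - γ * ρ ^ 2 := by linarith
  have hq3 : ℓ₀ ≤ J * (1 - γ * ρ ^ 2) := by
    have hkey' : ℓ₀ / (1 - γ * ρ ^ 2) ≤ J := by rwa [div_eq_mul_inv]
    exact (div_le_iff₀ h1q).mp hkey'
  rcases eq_or_lt_of_le hρ0 with hρz | hρpos
  · rw [← hρz, mul_zero]; norm_num
  · have hd : 0 < J - ℓ₀ := by rw [hJdef]; exact sub_pos.mpr hJ
    have hq4 : J * (γ * ρ ^ 2) ≤ J - ℓ₀ := by nlinarith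
    have h1α : 1 + ℓ₀ / (J - ℓ₀) = J / (J - ℓ₀) := by field_simp; ring
    have h6 : (1 + ℓ₀ / (J - ℓ₀)) * (γ * ρ ^ 2) ≤ 1 := by
      rw [h1α, div_mul_eq_mul_div, div_le_one hd]
      linarith [hq4]
    have hρ2 : 0 < ρ ^ 2 := by positivity
    have hγ'lt' : γ' < (1 + ℓ₀ / (J - ℓ₀)) * γ := hγ'lt
    have hfin : γ' * ρ ^ 2 < 1 :=
      calc γ' * ρ ^ 2 < ((1 + ℓ₀ / (J - ℓ₀)) * γ) * ρ ^ 2 :=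
            mul_lt_mul_of_pos_right hγ'lt' hρ2
        _ = (1 + ℓ₀ / (J - ℓ₀)) * (γ * ρ ^ 2) := by ring
        _ ≤ 1 := h6
    have hsq : (Real.sqrt γ' * ρ) ^ 2 < 1 := by
      rw [mul_pow, Real.sq_sqrt hγ'pos.le]; exact hfin
    have hnn : 0 ≤ Real.sqrt γ' * ρ := mul_nonneg (Real.sqrt_nonneg _) hρ0
    exact (pow_lt_one_iff_of_nonneg hnn two_ne_zero).mp hsq
end

section
/- Let γ ∈ (0,1], ν > 0, K ∈ S_γ(ν), d > 0, and let x₀ ∈ ℝⁿ satisfy ‖x₀‖ ≤ d. Define the damped closed-loop trajectory x_t = (√γ(A − BKC))^t x₀ for t ∈ ℕ. Then for every t ∈ ℕ, ‖x_t‖² ≤ (1 − ℓ₀/ν)^t · ν d²/ℓ₀. -/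
open Matrix

section Aux

open scoped NNReal Pointwise

attribute [local instance]
  Matrix.linftyOpNormedAddCommGroup
  Matrix.linftyOpNormedSpace
  Matrix.linftyOpNormedRing
  Matrix.linftyOpNormedAlgebra

namespace MyAux

variable {k : ℕ}

lemma nnnorm_map_ofReal (M : Matrix (Fin k) (Fin k) ℝ) :
    ‖M.map (algebraMap ℝ ℂ)‖₊ = ‖M‖₊ := by
  simp only [Matrix.linfty_opNNNorm_def, Matrix.map_apply]
  congr 1
  funext i
  congr 1
  funext j
  simp

lemma entry_nnnorm_le (M : Matrix (Fin k) (Fin k) ℝ) (i j : Fin k) : ‖M i j‖₊ ≤ ‖M‖₊ := by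
  rw [Matrix.linfty_opNNNorm_def]
  calc ‖M i j‖₊ ≤ ∑ j' : Fin k, ‖M i j'‖₊ :=
        Finset.single_le_sum (f := fun j' => ‖M i j'‖₊) (fun _ _ => zero_le) (Finset.mem_univ j)
    _ ≤ _ := Finset.le_sup (f := fun i => ∑ j' : Fin k, ‖M i j'‖₊) (Finset.mem_univ i)

lemma norm_transpose_le (M : Matrix (Fin k) (Fin k) ℝ) : ‖Mᵀ‖ ≤ (k : ℝ) * ‖M‖ := by
  have h : ‖Mᵀ‖₊ ≤ (k : ℝ≥0) * ‖M‖₊ := by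
    rw [Matrix.linfty_opNNNorm_def]
    apply Finset.sup_le
    intro j _
    calc ∑ i, ‖Mᵀ j i‖₊ ≤ ∑ _i : Fin k, ‖M‖₊ :=
          Finset.sum_le_sum fun i _ => entry_nnnorm_le M i j
      _ = (k : ℝ≥0) * ‖M‖₊ := by
          simp [Finset.sum_const, nsmul_eq_mul]
  exact_mod_cast h

/-- Gelfand: geometric decay of powers from spectral radius `< 1`, complex case. -/
lemma geom_decay_complex (M : Matrix (Fin k) (Fin k) ℂ)
    (h : spectralRadius ℂ M < 1) :
    ∃ c : ℝ, 1 ≤ c ∧ ∃ ρ : ℝ, 0 < ρ ∧ ρ < 1 ∧ ∀ t, ‖M ^ t‖ ≤ c * ρ ^ t := by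
  obtain ⟨r, hr1, hr2⟩ := exists_between h
  have hrtop : r ≠ ⊤ := ne_top_of_lt hr2
  have hr0 : 0 < r := zero_le.trans_lt hr1
  set ρ : ℝ := r.toReal with hρdef
  have hρ0 : 0 < ρ := ENNReal.toReal_pos hr0.ne' hrtop
  have hρ1 : ρ < 1 := by
    rw [hρdef, ← ENNReal.toReal_one]
    exact ENNReal.toReal_strict_mono (by simp) hr2
  have hgel := spectrum.pow_nnnorm_pow_one_div_tendsto_nhds_spectralRadius M
  have hev : ∀ᶠ t : ℕ in Filter.atTop, (‖M ^ t‖₊ : ENNReal) ^ (1 / (t : ℝ)) < r :=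
    hgel.eventually_lt_const hr1
  obtain ⟨N, hN⟩ := Filter.eventually_atTop.mp hev
  have hbig : ∀ t : ℕ, N ≤ t → 1 ≤ t → ‖M ^ t‖ ≤ ρ ^ t := by
    intro t htN ht1
    have h1 := hN t htN
    have ht0 : (t : ℝ) ≠ 0 := by positivity
    have h2 : ((‖M ^ t‖₊ : ENNReal) ^ (1 / (t : ℝ))) ^ (t : ℝ) ≤ r ^ (t : ℝ) :=
      ENNReal.rpow_le_rpow h1.le (by positivity)
    rw [← ENNReal.rpow_mul, one_div, inv_mul_cancel₀ ht0, ENNReal.rpow_one] at h2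
    have hr' : r = ENNReal.ofReal ρ := (ENNReal.ofReal_toReal hrtop).symm
    rw [hr', ENNReal.ofReal_rpow_of_pos hρ0] at h2
    have h3 : ‖M ^ t‖₊ ≤ (ρ ^ (t : ℝ)).toNNReal := by
      rw [ENNReal.ofReal] at h2; exact_mod_cast h2
    have h4 : ‖M ^ t‖ ≤ ρ ^ (t : ℝ) := by
      have h5 := NNReal.coe_le_coe.mpr h3
      rwa [coe_nnnorm, Real.coe_toNNReal _ (by positivity)] at h5
    rwa [Real.rpow_natCast] at h4
  -- now assemble the constant
  set c : ℝ := (∑ s ∈ Finset.range (max N 1 + 1), ‖M ^ s‖ / ρ ^ s) + 1 with hc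
  have hcterm : ∀ s, s ∈ Finset.range (max N 1 + 1) → ‖M ^ s‖ / ρ ^ s ≤ c - 1 := by
    intro s hs
    rw [hc, add_sub_cancel_right]
    exact Finset.single_le_sum (f := fun s => ‖M ^ s‖ / ρ ^ s)
      (fun i _ => by positivity) hs
  have hc1 : 1 ≤ c := by
    rw [hc]
    have : (0:ℝ) ≤ ∑ s ∈ Finset.range (max N 1 + 1), ‖M ^ s‖ / ρ ^ s :=
      Finset.sum_nonneg fun i _ => by positivity
    linarith
  refine ⟨c, hc1, ρ, hρ0, hρ1, fun t => ?_⟩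
  by_cases ht : t ≤ max N 1
  · have := hcterm t (Finset.mem_range.mpr (by omega))
    have hρt : (0:ℝ) < ρ ^ t := by positivity
    calc ‖M ^ t‖ = (‖M ^ t‖ / ρ ^ t) * ρ ^ t := by field_simp
      _ ≤ (c - 1) * ρ ^ t := by nlinarith
      _ ≤ c * ρ ^ t := by nlinarith
  · have hmN := le_max_left N 1
    have hm1 := le_max_right N 1
    have h1 : N ≤ t := by omega
    have h2 : 1 ≤ t := by omega
    calc ‖M ^ t‖ ≤ ρ ^ t := hbig t h1 h2
      _ ≤ c * ρ ^ t := by nlinarith [pow_pos hρ0 t]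


lemma geom_decay_real (M : Matrix (Fin k) (Fin k) ℝ)
    (h : spectralRadius ℂ (M.map (algebraMap ℝ ℂ)) < 1) :
    ∃ c : ℝ, 1 ≤ c ∧ ∃ ρ : ℝ, 0 < ρ ∧ ρ < 1 ∧ ∀ t, ‖M ^ t‖ ≤ c * ρ ^ t := by
  obtain ⟨c, hc, ρ, hρ0, hρ1, hb⟩ := geom_decay_complex _ h
  refine ⟨c, hc, ρ, hρ0, hρ1, fun t => ?_⟩
  have hmap : (M.map (algebraMap ℝ ℂ)) ^ t = (M ^ t).map (algebraMap ℝ ℂ) := by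
    have := map_pow ((algebraMap ℝ ℂ).mapMatrix) M t
    simpa [RingHom.mapMatrix_apply] using this.symm
  have hb' := hb t
  rw [hmap] at hb'
  have hn : ‖(M ^ t).map (algebraMap ℝ ℂ)‖ = ‖M ^ t‖ := by
    rw [← coe_nnnorm, ← coe_nnnorm, nnnorm_map_ofReal]
  rwa [hn] at hb'

lemma spectralRadius_smul_lt_one (hk : 1 ≤ k) (γ : ℝ) (hγ0 : 0 < γ)
    (M : Matrix (Fin k) (Fin k) ℝ)
    (h : Real.sqrt γ * specRad M < 1) :
    spectralRadius ℂ ((Real.sqrt γ • M).map (algebraMap ℝ ℂ)) < 1 := by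
  haveI : Nonempty (Fin k) := ⟨⟨0, hk⟩⟩
  set a := M.map (algebraMap ℝ ℂ) with ha
  have hs0 : (0:ℝ) < Real.sqrt γ := Real.sqrt_pos.mpr hγ0
  have hsC : ((Real.sqrt γ : ℝ) : ℂ) ≠ 0 := by
    simpa using hs0.ne'
  have hmap : (Real.sqrt γ • M).map (algebraMap ℝ ℂ)
      = ((Real.sqrt γ : ℝ) : ℂ) • a := by
    ext i j
    simp [ha, Matrix.map_apply, Matrix.smul_apply, Algebra.algebraMap_self,
      Complex.ofReal_mul]
  rw [hmap]
  have h1 : spectralRadius ℂ (((Real.sqrt γ : ℝ) : ℂ) • a) < (1 : NNReal) := by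
    apply spectrum.spectralRadius_lt_of_forall_lt
    intro z hz
    have hset : spectrum ℂ ((((Real.sqrt γ : ℝ)) : ℂ) • a)
        = (Units.mk0 _ hsC : ℂˣ) • spectrum ℂ a := by
      rw [← spectrum.unit_smul_eq_smul a (Units.mk0 _ hsC)]
      rfl
    rw [hset] at hz
    obtain ⟨μ, hμ, hzeq⟩ := hz
    have hbdd : BddAbove {r : ℝ | ∃ μ' ∈ spectrum ℂ a, r = ‖μ'‖} := by
      refine ⟨‖a‖, ?_⟩
      rintro r ⟨μ', hμ', rfl⟩
      exact spectrum.norm_le_norm_of_mem hμ'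
    have hμle : ‖μ‖ ≤ specRad M := le_csSup hbdd ⟨μ, hμ, rfl⟩
    have hzn : ‖z‖ < 1 := by
      rw [← hzeq]
      beta_reduce
      have : ‖((Units.mk0 _ hsC : ℂˣ) : ℂ) • μ‖ = Real.sqrt γ * ‖μ‖ := by
        simp [smul_eq_mul, norm_mul, abs_of_pos hs0]
      rw [this]
      calc Real.sqrt γ * ‖μ‖ ≤ Real.sqrt γ * specRad M :=
            mul_le_mul_of_nonneg_left hμle hs0.le
        _ < 1 := h
    have : (‖z‖₊ : ℝ) < 1 := by simpa using hzn
    exact_mod_cast this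
  simpa using h1

lemma quadform_le_trace {P : Matrix (Fin k) (Fin k) ℝ} (hP : P.PosSemidef)
    (x : Fin k → ℝ) :
    x ⬝ᵥ (P *ᵥ x) ≤ P.trace * (x ⬝ᵥ x) := by
  classical
  have hH := hP.isHermitian
  set U : Matrix (Fin k) (Fin k) ℝ := (hH.eigenvectorUnitary : Matrix (Fin k) (Fin k) ℝ) with hU
  set lam : Fin k → ℝ := hH.eigenvalues with hlam
  have hUU : star U * U = 1 := by
    simpa [hU] using (Unitary.mem_iff.mp hH.eigenvectorUnitary.prop).1
  have hUU' : U * star U = 1 := by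
    simpa [hU] using (Unitary.mem_iff.mp hH.eigenvectorUnitary.prop).2
  have hDeq : (RCLike.ofReal ∘ lam : Fin k → ℝ) = lam := by
    funext i; simp
  have hspec : P = U * Matrix.diagonal lam * star U := by
    have := hH.spectral_theorem
    rw [Matrix.star_eq_conjTranspose]
    rw [← hDeq]
    exact this
  have hstarU : star U = Uᵀ := by
    rw [Matrix.star_eq_conjTranspose, Matrix.conjTranspose_eq_transpose_of_trivial]
  have htrace : P.trace = ∑ i, lam i := by
    rw [hspec, Matrix.trace_mul_cycle, hUU, one_mul, Matrix.trace_diagonal]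
  set y : Fin k → ℝ := Uᵀ *ᵥ x with hy
  have hUUt : U * Uᵀ = 1 := by rw [← hstarU]; exact hUU'
  have hyy : y ⬝ᵥ y = x ⬝ᵥ x := by
    show (Uᵀ *ᵥ x) ⬝ᵥ (Uᵀ *ᵥ x) = x ⬝ᵥ x
    rw [Matrix.dotProduct_mulVec, Matrix.vecMul_transpose, Matrix.mulVec_mulVec,
      hUUt, Matrix.one_mulVec]
  have hquad : x ⬝ᵥ (P *ᵥ x) = ∑ i, lam i * (y i * y i) := by
    rw [hspec, hstarU]
    rw [← Matrix.mulVec_mulVec, ← Matrix.mulVec_mulVec]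
    rw [Matrix.dotProduct_mulVec, ← Matrix.mulVec_transpose]
    show (Uᵀ *ᵥ x) ⬝ᵥ (Matrix.diagonal lam *ᵥ y) = _
    rw [← hy]
    simp only [dotProduct, Matrix.mulVec_diagonal]
    exact Finset.sum_congr rfl fun i _ => by ring
  have hlam_nonneg : ∀ i, 0 ≤ lam i := fun i => hP.eigenvalues_nonneg i
  have hbound : ∀ i : Fin k, lam i * (y i * y i) ≤ (∑ j, lam j) * (y i * y i) :=
    fun i => mul_le_mul_of_nonneg_right
      (Finset.single_le_sum (fun j _ => hlam_nonneg j) (Finset.mem_univ i))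
      (mul_self_nonneg _)
  calc x ⬝ᵥ (P *ᵥ x) = ∑ i, lam i * (y i * y i) := hquad
    _ ≤ ∑ i, (∑ j, lam j) * (y i * y i) := Finset.sum_le_sum (fun i _ => hbound i)
    _ = (∑ j, lam j) * (y ⬝ᵥ y) := by rw [← Finset.mul_sum]; rfl
    _ = P.trace * (x ⬝ᵥ x) := by rw [htrace, hyy]


lemma dot_self_nonneg {j : ℕ} (v : Fin j → ℝ) : 0 ≤ v ⬝ᵥ v :=
  Finset.sum_nonneg fun i _ => mul_self_nonneg _

lemma real_quad_expand {j : ℕ} (X : Matrix (Fin j) (Fin j) ℝ) (ℓ : ℝ) (v : Fin j → ℝ) :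
    v ⬝ᵥ ((X - ℓ • 1) *ᵥ v) = v ⬝ᵥ (X *ᵥ v) - ℓ * (v ⬝ᵥ v) := by
  rw [Matrix.sub_mulVec, dotProduct_sub]
  congr 1
  rw [Matrix.smul_mulVec, Matrix.one_mulVec, dotProduct_smul, smul_eq_mul]

lemma dot_mulVec_left {j : ℕ} (M : Matrix (Fin j) (Fin j) ℝ) (y z : Fin j → ℝ) :
    (M *ᵥ y) ⬝ᵥ z = y ⬝ᵥ (Mᵀ *ᵥ z) := by
  rw [Matrix.dotProduct_mulVec, Matrix.vecMul_transpose]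

lemma vecNorm_sq {j : ℕ} (w : Fin j → ℝ) : vecNorm w ^ 2 = w ⬝ᵥ w := by
  rw [vecNorm, Real.sq_sqrt (Finset.sum_nonneg fun i _ => sq_nonneg _)]
  simp [dotProduct, pow_two]

lemma key {n m p : ℕ} (hn : 1 ≤ n)
    (A : Matrix (Fin n) (Fin n) ℝ) (B : Matrix (Fin n) (Fin m) ℝ) (C : Matrix (Fin p) (Fin n) ℝ)
    (Q : Matrix (Fin n) (Fin n) ℝ) (R : Matrix (Fin m) (Fin m) ℝ)
    (hQsymm : Q.IsSymm) (hRsymm : R.IsSymm)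
    (ℓ₀ : ℝ) (hℓ₀ : 0 < ℓ₀)
    (hQlb : (Q - ℓ₀ • (1 : Matrix (Fin n) (Fin n) ℝ)).PosSemidef)
    (hRlb : (R - ℓ₀ • (1 : Matrix (Fin m) (Fin m) ℝ)).PosSemidef)
    (γ : ℝ) (hγ0 : 0 < γ) (ν : ℝ) (hν : 0 < ν)
    (K : Matrix (Fin m) (Fin p) ℝ)
    (hK : inS A B C γ K) (hKν : Jcost A B C Q R γ K ≤ ν)
    (d : ℝ) (hd : 0 < d) (x₀ : Fin n → ℝ) (hx₀ : vecNorm x₀ ≤ d) (t : ℕ) :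
    vecNorm ((Real.sqrt γ • Acl A B C K) ^ t *ᵥ x₀) ^ 2 ≤
      (1 - ℓ₀ / ν) ^ t * (ν * d ^ 2 / ℓ₀) := by
  classical
  haveI : Nonempty (Fin n) := ⟨⟨0, hn⟩⟩
  set M : Matrix (Fin n) (Fin n) ℝ := Real.sqrt γ • Acl A B C K with hMdef
  set S : Matrix (Fin n) (Fin n) ℝ := Q + Cᵀ * Kᵀ * R * K * C with hSdef
  set g : ℕ → Matrix (Fin n) (Fin n) ℝ := fun s => Mᵀ ^ s * S * M ^ s with hgdef
  have hsγ : Real.sqrt γ * Real.sqrt γ = γ := Real.mul_self_sqrt hγ0.le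
  have hfg : ∀ s : ℕ, γ ^ s • ((Acl A B C K)ᵀ ^ s * S * (Acl A B C K) ^ s) = g s := by
    intro s
    show γ ^ s • ((Acl A B C K)ᵀ ^ s * S * (Acl A B C K) ^ s)
        = ((Real.sqrt γ • Acl A B C K)ᵀ) ^ s * S * (Real.sqrt γ • Acl A B C K) ^ s
    rw [Matrix.transpose_smul, smul_pow, smul_pow, Matrix.smul_mul, Matrix.smul_mul,
      Matrix.mul_smul, smul_smul, ← mul_pow, hsγ]
  -- geometric decay of powers of M
  have hrad := spectralRadius_smul_lt_one hn γ hγ0 (Acl A B C K) hK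
  obtain ⟨c, hc1, ρ, hρ0, hρ1, hpow⟩ := geom_decay_real M hrad
  have hρ2 : ρ ^ 2 < 1 := by nlinarith
  -- summability
  have hgsum : Summable g := by
    apply Summable.of_norm
    have hbound : ∀ s : ℕ, ‖g s‖ ≤ ((n : ℝ) * c * ‖S‖ * c) * (ρ ^ 2) ^ s := by
      intro s
      have hMs := hpow s
      have hMss : (0:ℝ) ≤ ‖M ^ s‖ := norm_nonneg _
      have hMts : ‖Mᵀ ^ s‖ ≤ (n : ℝ) * (c * ρ ^ s) := by
        rw [← Matrix.transpose_pow]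
        calc ‖(M ^ s)ᵀ‖ ≤ (n : ℝ) * ‖M ^ s‖ := norm_transpose_le _
          _ ≤ (n : ℝ) * (c * ρ ^ s) :=
              mul_le_mul_of_nonneg_left hMs (by positivity)
      calc ‖g s‖ ≤ ‖Mᵀ ^ s * S‖ * ‖M ^ s‖ := norm_mul_le _ _
        _ ≤ (‖Mᵀ ^ s‖ * ‖S‖) * ‖M ^ s‖ :=
            mul_le_mul_of_nonneg_right (norm_mul_le _ _) (norm_nonneg _)
        _ ≤ (((n : ℝ) * (c * ρ ^ s)) * ‖S‖) * (c * ρ ^ s) := by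
            apply mul_le_mul
            · exact mul_le_mul_of_nonneg_right hMts (norm_nonneg _)
            · exact hMs
            · exact norm_nonneg _
            · positivity
        _ = ((n : ℝ) * c * ‖S‖ * c) * (ρ ^ 2) ^ s := by ring
    exact Summable.of_nonneg_of_le (fun s => norm_nonneg _) hbound
      ((summable_geometric_of_lt_one (by positivity) hρ2).mul_left _)
  set P : Matrix (Fin n) (Fin n) ℝ := ∑' s, g s with hPdef
  have hPmat : Pmat A B C Q R γ K = P := by
    have h0 : Pmat A B C Q R γ K
        = ∑' s : ℕ, γ ^ s • ((Acl A B C K)ᵀ ^ s * S * (Acl A B C K) ^ s) := rfl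
    rw [h0]
    exact tsum_congr hfg
  have hg0 : g 0 = S := by
    show Mᵀ ^ 0 * S * M ^ 0 = S
    simp
  -- Lyapunov equation
  let Lconj : Matrix (Fin n) (Fin n) ℝ →ₗ[ℝ] Matrix (Fin n) (Fin n) ℝ :=
    { toFun := fun X => Mᵀ * X * M
      map_add' := fun X Y => by simp only [mul_add, add_mul]
      map_smul' := fun a X => by
        simp only [mul_smul_comm, smul_mul_assoc, RingHom.id_apply]
    }
  let LC := LinearMap.toContinuousLinearMap Lconj
  have hg_succ : ∀ s : ℕ, g (s + 1) = LC (g s) := by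
    intro s
    show Mᵀ ^ (s + 1) * S * M ^ (s + 1) = Mᵀ * (Mᵀ ^ s * S * M ^ s) * M
    rw [pow_succ' Mᵀ s, pow_succ M s]
    simp only [Matrix.mul_assoc]
  have hLyap : P = S + Mᵀ * P * M := by
    have h0 : ∑' s, g s = g 0 + ∑' s, g (s + 1) := hgsum.tsum_eq_zero_add
    have h1 : ∑' s, g (s + 1) = Mᵀ * P * M := by
      calc ∑' s, g (s + 1) = ∑' s, LC (g s) := tsum_congr hg_succ
        _ = LC P := (LC.map_tsum hgsum).symm
        _ = Mᵀ * P * M := rfl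
    conv_lhs => rw [hPdef]
    rw [h0, hg0, h1]
  -- quadratic form machinery
  let qLin : (Fin n → ℝ) → (Matrix (Fin n) (Fin n) ℝ →ₗ[ℝ] ℝ) := fun x =>
    { toFun := fun X => x ⬝ᵥ (X *ᵥ x)
      map_add' := fun X Y => by
        simp only [Matrix.add_mulVec, dotProduct_add]
      map_smul' := fun a X => by
        simp only [Matrix.smul_mulVec, dotProduct_smul, RingHom.id_apply, smul_eq_mul] }
  let qC : (Fin n → ℝ) → (Matrix (Fin n) (Fin n) ℝ →L[ℝ] ℝ) := fun x =>
    LinearMap.toContinuousLinearMap (qLin x)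
  have hqP : ∀ x : Fin n → ℝ, x ⬝ᵥ (P *ᵥ x) = ∑' s, x ⬝ᵥ (g s *ᵥ x) := fun x =>
    (qC x).map_tsum hgsum
  have hqsum : ∀ x : Fin n → ℝ, Summable (fun s => x ⬝ᵥ (g s *ᵥ x)) := fun x =>
    hgsum.mapL (qC x)
  -- positive semidefiniteness facts
  have hQherm : Q.IsHermitian := by
    rw [Matrix.IsHermitian, Matrix.conjTranspose_eq_transpose_of_trivial]
    exact hQsymm
  have hRherm : R.IsHermitian := by
    rw [Matrix.IsHermitian, Matrix.conjTranspose_eq_transpose_of_trivial]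
    exact hRsymm
  have hQuadQ : ∀ v : Fin n → ℝ, ℓ₀ * (v ⬝ᵥ v) ≤ v ⬝ᵥ (Q *ᵥ v) := by
    intro v
    have h := hQlb.dotProduct_mulVec_nonneg v
    rw [star_trivial, real_quad_expand] at h
    linarith
  have hQuadR : ∀ v : Fin m → ℝ, ℓ₀ * (v ⬝ᵥ v) ≤ v ⬝ᵥ (R *ᵥ v) := by
    intro v
    have h := hRlb.dotProduct_mulVec_nonneg v
    rw [star_trivial, real_quad_expand] at h
    linarith
  have hRpsd : R.PosSemidef := by
    refine Matrix.PosSemidef.of_dotProduct_mulVec_nonneg hRherm fun v => ?_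
    rw [star_trivial]
    have := hQuadR v
    have := dot_self_nonneg v
    nlinarith
  have hKCpsd : (Cᵀ * Kᵀ * R * K * C).PosSemidef := by
    have h1 := hRpsd.conjTranspose_mul_mul_same (K * C)
    have heq : (K * C)ᴴ * R * (K * C) = Cᵀ * Kᵀ * R * K * C := by
      rw [Matrix.conjTranspose_mul, Matrix.conjTranspose_eq_transpose_of_trivial,
        Matrix.conjTranspose_eq_transpose_of_trivial]
      simp only [Matrix.mul_assoc]
    rwa [heq] at h1
  have hSquad : ∀ v : Fin n → ℝ, ℓ₀ * (v ⬝ᵥ v) ≤ v ⬝ᵥ (S *ᵥ v) := by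
    intro v
    have h1 := hQuadQ v
    have h2 := hKCpsd.dotProduct_mulVec_nonneg v
    rw [star_trivial] at h2
    have h3 : v ⬝ᵥ (S *ᵥ v) = v ⬝ᵥ (Q *ᵥ v) + v ⬝ᵥ ((Cᵀ * Kᵀ * R * K * C) *ᵥ v) := by
      rw [hSdef, Matrix.add_mulVec, dotProduct_add]
    linarith
  have hSpsd : S.PosSemidef := by
    refine Matrix.PosSemidef.of_dotProduct_mulVec_nonneg (Matrix.IsHermitian.add hQherm hKCpsd.1) fun v => ?_
    rw [star_trivial]
    have := hSquad v
    have := dot_self_nonneg v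
    nlinarith
  have hgpsd : ∀ s : ℕ, (g s).PosSemidef := by
    intro s
    have h1 := hSpsd.conjTranspose_mul_mul_same (M ^ s)
    have heq : (M ^ s)ᴴ = Mᵀ ^ s := by
      rw [Matrix.conjTranspose_eq_transpose_of_trivial, Matrix.transpose_pow]
    rw [heq] at h1
    exact h1
  have hq0 : ∀ (s : ℕ) (x : Fin n → ℝ), 0 ≤ x ⬝ᵥ (g s *ᵥ x) := by
    intro s x
    have := (hgpsd s).dotProduct_mulVec_nonneg x
    rwa [star_trivial] at this
  have hPlb : ∀ x : Fin n → ℝ, x ⬝ᵥ (S *ᵥ x) ≤ x ⬝ᵥ (P *ᵥ x) := by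
    intro x
    rw [hqP x]
    have h := (hqsum x).le_tsum 0 (fun j _ => hq0 j x)
    rwa [hg0] at h
  -- P is PSD
  let tLin : Matrix (Fin n) (Fin n) ℝ →ₗ[ℝ] Matrix (Fin n) (Fin n) ℝ :=
    { toFun := fun X => Xᴴ
      map_add' := fun X Y => Matrix.conjTranspose_add X Y
      map_smul' := fun a X => by
        simp only [RingHom.id_apply, Matrix.conjTranspose_smul, star_trivial] }
  let tC := LinearMap.toContinuousLinearMap tLin
  have hPherm : P.IsHermitian := by
    show Pᴴ = P
    calc Pᴴ = tC P := rfl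
      _ = ∑' s, tC (g s) := tC.map_tsum hgsum
      _ = ∑' s, g s := tsum_congr (fun s => (hgpsd s).1)
      _ = P := rfl
  have hPpsd : P.PosSemidef := by
    refine Matrix.PosSemidef.of_dotProduct_mulVec_nonneg hPherm fun x => ?_
    rw [star_trivial, hqP x]
    exact tsum_nonneg (fun s => hq0 s x)
  -- trace bound
  have htr : P.trace ≤ ν := by
    have h0 : Jcost A B C Q R γ K = (Pmat A B C Q R γ K).trace := rfl
    rw [h0, hPmat] at hKν
    exact hKν
  have hub : ∀ x : Fin n → ℝ, x ⬝ᵥ (P *ᵥ x) ≤ ν * (x ⬝ᵥ x) := fun x =>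
    le_trans (quadform_le_trace hPpsd x)
      (mul_le_mul_of_nonneg_right htr (dot_self_nonneg x))
  -- ℓ₀ ≤ ν
  have hℓν : ℓ₀ ≤ ν := by
    set e : Fin n → ℝ := Pi.single ⟨0, hn⟩ 1 with he
    have hee : e ⬝ᵥ e = 1 := by
      simp [he, dotProduct, Pi.single_apply]
    have h1 := hSquad e
    have h2 := hPlb e
    have h3 := hub e
    rw [hee] at h1 h3
    linarith
  have hβ0 : 0 ≤ 1 - ℓ₀ / ν := by
    have : ℓ₀ / ν ≤ 1 := (div_le_one hν).mpr hℓν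
    linarith
  -- trajectory
  set X : ℕ → Fin n → ℝ := fun s => M ^ s *ᵥ x₀ with hXdef
  set V : ℕ → ℝ := fun s => X s ⬝ᵥ (P *ᵥ X s) with hVdef
  have hVlb : ∀ s, ℓ₀ * (X s ⬝ᵥ X s) ≤ V s := fun s =>
    le_trans (hSquad (X s)) (hPlb (X s))
  have hVub : ∀ s, V s ≤ ν * (X s ⬝ᵥ X s) := fun s => hub (X s)
  have hstep : ∀ s, V (s + 1) ≤ (1 - ℓ₀ / ν) * V s := by
    intro s
    have hXs : X (s + 1) = M *ᵥ X s := by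
      show M ^ (s + 1) *ᵥ x₀ = M *ᵥ (M ^ s *ᵥ x₀)
      rw [Matrix.mulVec_mulVec, ← pow_succ']
    have h1 : V (s + 1) = X s ⬝ᵥ ((Mᵀ * P * M) *ᵥ X s) := by
      show X (s + 1) ⬝ᵥ (P *ᵥ X (s + 1)) = _
      rw [hXs, dot_mulVec_left, Matrix.mulVec_mulVec, Matrix.mulVec_mulVec]
    have hMPM : Mᵀ * P * M = P - S := eq_sub_of_add_eq' hLyap.symm
    have h2 : V (s + 1) = V s - X s ⬝ᵥ (S *ᵥ X s) := by
      rw [h1, hMPM, Matrix.sub_mulVec, dotProduct_sub]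
    have h3 := hSquad (X s)
    have h4 := hVub s
    have h5 : (ℓ₀ / ν) * V s ≤ ℓ₀ * (X s ⬝ᵥ X s) := by
      have h6 : (ℓ₀ / ν) * V s ≤ (ℓ₀ / ν) * (ν * (X s ⬝ᵥ X s)) :=
        mul_le_mul_of_nonneg_left h4 (by positivity)
      have h7 : (ℓ₀ / ν) * (ν * (X s ⬝ᵥ X s)) = ℓ₀ * (X s ⬝ᵥ X s) := by
        have hν' : ν ≠ 0 := ne_of_gt hν
        field_simp
      linarith
    have h8 : V (s + 1) ≤ V s - (ℓ₀ / ν) * V s := by linarith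
    linarith [h8]
  have hVt : ∀ s, V s ≤ (1 - ℓ₀ / ν) ^ s * V 0 := by
    intro s
    induction s with
    | zero => simp
    | succ s ih =>
      calc V (s + 1) ≤ (1 - ℓ₀ / ν) * V s := hstep s
        _ ≤ (1 - ℓ₀ / ν) * ((1 - ℓ₀ / ν) ^ s * V 0) :=
            mul_le_mul_of_nonneg_left ih hβ0
        _ = (1 - ℓ₀ / ν) ^ (s + 1) * V 0 := by ring
  have hX0 : X 0 = x₀ := by
    show M ^ 0 *ᵥ x₀ = x₀
    rw [pow_zero, Matrix.one_mulVec]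
  have hx0sq : x₀ ⬝ᵥ x₀ ≤ d ^ 2 := by
    rw [← vecNorm_sq]
    have h0 : 0 ≤ vecNorm x₀ := Real.sqrt_nonneg _
    nlinarith
  have hV0 : V 0 ≤ ν * d ^ 2 := by
    have := hVub 0
    rw [hX0] at this
    have h2 : ν * (x₀ ⬝ᵥ x₀) ≤ ν * d ^ 2 := mul_le_mul_of_nonneg_left hx0sq hν.le
    linarith
  have hfinal : X t ⬝ᵥ X t ≤ (1 - ℓ₀ / ν) ^ t * (ν * d ^ 2 / ℓ₀) := by
    have h1 : ℓ₀ * (X t ⬝ᵥ X t) ≤ (1 - ℓ₀ / ν) ^ t * (ν * d ^ 2) :=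
      calc ℓ₀ * (X t ⬝ᵥ X t) ≤ V t := hVlb t
        _ ≤ (1 - ℓ₀ / ν) ^ t * V 0 := hVt t
        _ ≤ (1 - ℓ₀ / ν) ^ t * (ν * d ^ 2) :=
            mul_le_mul_of_nonneg_left hV0 (pow_nonneg hβ0 t)
    calc X t ⬝ᵥ X t ≤ ((1 - ℓ₀ / ν) ^ t * (ν * d ^ 2)) / ℓ₀ :=
          (le_div_iff₀' hℓ₀).mpr h1
      _ = (1 - ℓ₀ / ν) ^ t * (ν * d ^ 2 / ℓ₀) := by ring
  show vecNorm (X t) ^ 2 ≤ _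
  rw [vecNorm_sq]
  exact hfinal

end MyAux
end Aux

/-- exponential decay of the damped closed-loop trajectory:
`‖x_t‖² ≤ (1 − ℓ₀/ν)^t · νd²/ℓ₀`. -/
theorem stmt9
    {n m p : ℕ} (hn : 1 ≤ n) (hm : 1 ≤ m) (hp : 1 ≤ p)
    (A : Matrix (Fin n) (Fin n) ℝ) (B : Matrix (Fin n) (Fin m) ℝ) (C : Matrix (Fin p) (Fin n) ℝ)
    (Q : Matrix (Fin n) (Fin n) ℝ) (R : Matrix (Fin m) (Fin m) ℝ)
    (hQsymm : Q.IsSymm) (hRsymm : R.IsSymm)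
    (ℓ₀ ℓ₁ ψ φ : ℝ) (hℓ₀ : 0 < ℓ₀) (hℓ₀₁ : ℓ₀ ≤ ℓ₁) (hψ : 1 ≤ ψ) (hφ : 1 ≤ φ)
    (hQlb : (Q - ℓ₀ • (1 : Matrix (Fin n) (Fin n) ℝ)).PosSemidef)
    (hQub : (ℓ₁ • (1 : Matrix (Fin n) (Fin n) ℝ) - Q).PosSemidef)
    (hRlb : (R - ℓ₀ • (1 : Matrix (Fin m) (Fin m) ℝ)).PosSemidef)
    (hRub : (ℓ₁ • (1 : Matrix (Fin m) (Fin m) ℝ) - R).PosSemidef)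
    (hB : spNorm B ≤ ψ) (hC : spNorm C ≤ φ)
    (γ : ℝ) (hγ : γ ∈ Set.Ioc (0 : ℝ) 1) (ν : ℝ) (hν : 0 < ν)
    (K : Matrix (Fin m) (Fin p) ℝ)
    (hK : inS A B C γ K) (hKν : Jcost A B C Q R γ K ≤ ν)
    (d : ℝ) (hd : 0 < d) (x₀ : Fin n → ℝ) (hx₀ : vecNorm x₀ ≤ d) :
    ∀ t : ℕ,
      vecNorm ((Real.sqrt γ • Acl A B C K) ^ t *ᵥ x₀) ^ 2 ≤
        (1 - ℓ₀ / ν) ^ t * (ν * d ^ 2 / ℓ₀) := by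
  intro t
  exact MyAux.key hn A B C Q R hQsymm hRsymm ℓ₀ hℓ₀ hQlb hRlb γ hγ.1 ν hν K hK hKν d hd x₀ hx₀ t
end

section
/- Let γ ∈ (0,1], ν > 0, K ∈ S_γ(ν), d > 0, and let x₀ ∈ ℝⁿ satisfy ‖x₀‖ ≤ d. Define x_t = (√γ(A − BKC))^t x₀ for t ∈ ℕ. Then for every truncation horizon τ ∈ ℕ, the tail of the discounted cost satisfies Σ_{t=τ}^∞ x_tᵀ(Q + CᵀKᵀRKC)x_t = x_τᵀ P_K(γ) x_τ ≤ (1 − ℓ₀/ν)^τ · ν² d²/ℓ₀. -/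
open Matrix

section helpers

lemma dp_self_nonneg {k : ℕ} (v : Fin k → ℝ) : 0 ≤ v ⬝ᵥ v :=
  Finset.sum_nonneg fun i _ => mul_self_nonneg _

lemma conj_form {n k : ℕ} (N : Matrix (Fin k) (Fin k) ℝ) (W : Matrix (Fin k) (Fin n) ℝ)
    (x : Fin n → ℝ) : x ⬝ᵥ ((Wᵀ * N * W) *ᵥ x) = (W *ᵥ x) ⬝ᵥ (N *ᵥ (W *ᵥ x)) := by
  rw [← Matrix.mulVec_mulVec, ← Matrix.mulVec_mulVec, Matrix.dotProduct_mulVec x,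
    Matrix.vecMul_transpose]

lemma psd_form_lb {k : ℕ} {M : Matrix (Fin k) (Fin k) ℝ} {ℓ : ℝ}
    (h : (M - ℓ • (1 : Matrix (Fin k) (Fin k) ℝ)).PosSemidef) (y : Fin k → ℝ) :
    ℓ * (y ⬝ᵥ y) ≤ y ⬝ᵥ (M *ᵥ y) := by
  have h2 := h.dotProduct_mulVec_nonneg y
  simp only [star_trivial, Matrix.sub_mulVec, Matrix.smul_mulVec, Matrix.one_mulVec,
    dotProduct_sub, dotProduct_smul, smul_eq_mul] at h2
  linarith

lemma dp_single {k : ℕ} (N : Matrix (Fin k) (Fin k) ℝ) (i : Fin k) :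
    (Pi.single i 1 : Fin k → ℝ) ⬝ᵥ (N *ᵥ Pi.single i 1) = N i i := by
  classical
  simp [dotProduct, Matrix.mulVec, Pi.single_apply, mul_ite, ite_mul]

lemma dp_single_self {k : ℕ} (i : Fin k) :
    (Pi.single i 1 : Fin k → ℝ) ⬝ᵥ (Pi.single i 1 : Fin k → ℝ) = 1 := by
  classical
  simp [dotProduct, Pi.single_apply]

noncomputable def quadCLM {k : ℕ} (x y : Fin k → ℝ) : Matrix (Fin k) (Fin k) ℝ →L[ℝ] ℝ :=
  LinearMap.toContinuousLinearMap
    { toFun := fun N => x ⬝ᵥ (N *ᵥ y)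
      map_add' := fun M N => by simp [Matrix.add_mulVec, dotProduct_add]
      map_smul' := fun c N => by simp [Matrix.smul_mulVec, dotProduct_smul] }

@[simp] lemma quadCLM_apply {k : ℕ} (x y : Fin k → ℝ) (N : Matrix (Fin k) (Fin k) ℝ) :
    quadCLM x y N = x ⬝ᵥ (N *ᵥ y) := rfl

noncomputable def traceCLM (k : ℕ) : Matrix (Fin k) (Fin k) ℝ →L[ℝ] ℝ :=
  LinearMap.toContinuousLinearMap (Matrix.traceLinearMap (Fin k) ℝ ℝ)

@[simp] lemma traceCLM_apply {k : ℕ} (N : Matrix (Fin k) (Fin k) ℝ) :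
    traceCLM k N = N.trace := rfl

open scoped MatrixOrder in
lemma psd_form_le_trace {k : ℕ} {P : Matrix (Fin k) (Fin k) ℝ} (hP : P.PosSemidef)
    (x : Fin k → ℝ) : x ⬝ᵥ (P *ᵥ x) ≤ P.trace * (x ⬝ᵥ x) := by
  classical
  set S := CFC.sqrt P with hSdef
  have hSS : S * S = P := CFC.sqrt_mul_sqrt_self P hP.nonneg
  have hSsymm : Sᵀ = S := by
    have h := (Matrix.nonneg_iff_posSemidef.1 (CFC.sqrt_nonneg P)).1
    have : Sᴴ = Sᵀ := by
      ext i j; simp [Matrix.conjTranspose_apply]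
    rw [← this, h]
  have hSij : ∀ i j, S j i = S i j := fun i j => by
    calc S j i = Sᵀ i j := (Matrix.transpose_apply S i j).symm
      _ = S i j := by rw [hSsymm]
  have hP' : P = Sᵀ * (1 : Matrix (Fin k) (Fin k) ℝ) * S := by
    rw [hSsymm, Matrix.mul_one, hSS]
  have key : x ⬝ᵥ (P *ᵥ x) = (S *ᵥ x) ⬝ᵥ (S *ᵥ x) := by
    rw [hP', conj_form, Matrix.one_mulVec]
  have htr : P.trace = ∑ i, ∑ j, S i j ^ 2 := by
    rw [← hSS]
    simp only [Matrix.trace, Matrix.diag, Matrix.mul_apply]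
    exact Finset.sum_congr rfl fun i _ => Finset.sum_congr rfl fun j _ => by
      rw [hSij j i, pow_two]
  have hdp : x ⬝ᵥ x = ∑ j, x j ^ 2 := by simp [dotProduct, pow_two]
  rw [key, htr]
  have hCS : ∀ i, ((S *ᵥ x) i) ^ 2 ≤ (∑ j, S i j ^ 2) * (∑ j, x j ^ 2) := fun i => by
    simpa [Matrix.mulVec, dotProduct] using
      Finset.sum_mul_sq_le_sq_mul_sq Finset.univ (fun j => S i j) x
  calc (S *ᵥ x) ⬝ᵥ (S *ᵥ x) = ∑ i, ((S *ᵥ x) i) ^ 2 := by simp [dotProduct, pow_two]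
    _ ≤ ∑ i, (∑ j, S i j ^ 2) * (∑ j, x j ^ 2) := Finset.sum_le_sum fun i _ => hCS i
    _ = (∑ i, ∑ j, S i j ^ 2) * (x ⬝ᵥ x) := by rw [← Finset.sum_mul, hdp]

end helpers

section decay
open Filter
attribute [local instance] Matrix.linftyOpNormedRing Matrix.linftyOpNormedAlgebra

lemma entry_decay {k : ℕ} (L : Matrix (Fin k) (Fin k) ℝ) {r : ℝ} (hr : 0 < r)
    (h : specRad L < r) :
    ∀ᶠ t : ℕ in atTop, ∀ i j, |(L ^ t) i j| ≤ r ^ t := by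
  classical
  set Mc : Matrix (Fin k) (Fin k) ℂ := L.map (algebraMap ℝ ℂ) with hMc
  have hbdd : BddAbove {s : ℝ | ∃ μ ∈ spectrum ℂ Mc, s = ‖μ‖} := by
    have hcomp : IsCompact ((fun μ : ℂ => ‖μ‖) '' spectrum ℂ Mc) :=
      (spectrum.isCompact Mc).image continuous_norm
    have hset : {s : ℝ | ∃ μ ∈ spectrum ℂ Mc, s = ‖μ‖} =
        (fun μ : ℂ => ‖μ‖) '' spectrum ℂ Mc := by
      ext s; simp [Set.mem_image, eq_comm]
    rw [hset]; exact hcomp.bddAbove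
  have hsr : spectralRadius ℂ Mc < ENNReal.ofReal r := by
    have hle : spectralRadius ℂ Mc ≤ ENNReal.ofReal (specRad L) := by
      rw [spectralRadius]
      refine iSup₂_le fun μ hμ => ?_
      rw [← enorm_eq_nnnorm, ← ofReal_norm]
      exact ENNReal.ofReal_le_ofReal (le_csSup hbdd ⟨μ, hμ, rfl⟩)
    exact hle.trans_lt ((ENNReal.ofReal_lt_ofReal_iff hr).2 h)
  have hgel := spectrum.pow_nnnorm_pow_one_div_tendsto_nhds_spectralRadius Mc
  have hev : ∀ᶠ t : ℕ in atTop, (‖Mc ^ t‖₊ : ENNReal) ^ (1 / (t : ℝ)) < ENNReal.ofReal r :=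
    hgel.eventually_lt_const hsr
  filter_upwards [hev, eventually_ge_atTop 1] with t ht ht1 i j
  have htne : (t : ℝ) ≠ 0 := Nat.cast_ne_zero.2 (by omega)
  have hnorm : ‖Mc ^ t‖ ≤ r ^ t := by
    have h1 : (‖Mc ^ t‖₊ : ENNReal) = ((‖Mc ^ t‖₊ : ENNReal) ^ (1 / (t : ℝ))) ^ (t : ℝ) := by
      rw [← ENNReal.rpow_mul, one_div, inv_mul_cancel₀ htne, ENNReal.rpow_one]
    have h2 : (‖Mc ^ t‖₊ : ENNReal) ≤ ENNReal.ofReal (r ^ t) := by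
      rw [h1]
      calc ((‖Mc ^ t‖₊ : ENNReal) ^ (1 / (t : ℝ))) ^ (t : ℝ)
          ≤ (ENNReal.ofReal r) ^ (t : ℝ) := ENNReal.rpow_le_rpow ht.le (Nat.cast_nonneg t)
        _ = ENNReal.ofReal (r ^ (t : ℝ)) := ENNReal.ofReal_rpow_of_pos hr
        _ = ENNReal.ofReal (r ^ t) := by rw [Real.rpow_natCast]
    rw [← enorm_eq_nnnorm, ← ofReal_norm] at h2
    exact (ENNReal.ofReal_le_ofReal_iff (by positivity)).1 h2
  have hent : ‖(Mc ^ t) i j‖ ≤ ‖Mc ^ t‖ := by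
    have h2 : ‖(Mc ^ t) i j‖₊ ≤ ‖Mc ^ t‖₊ := by
      rw [Matrix.linfty_opNNNorm_def]
      exact le_trans
        (Finset.single_le_sum (f := fun jj => ‖(Mc ^ t) i jj‖₊) (fun _ _ => zero_le)
          (Finset.mem_univ j))
        (Finset.le_sup (f := fun i => ∑ jj : Fin k, ‖(Mc ^ t) i jj‖₊) (Finset.mem_univ i))
    exact h2
  have hmap : (Mc ^ t) i j = (((L ^ t) i j : ℝ) : ℂ) := by
    have : Mc ^ t = (L ^ t).map (algebraMap ℝ ℂ) := by
      rw [hMc, ← RingHom.mapMatrix_apply, ← RingHom.mapMatrix_apply, ← map_pow]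
    rw [this]
    simp [Matrix.map_apply]
  calc |(L ^ t) i j| = ‖(Mc ^ t) i j‖ := by rw [hmap, Complex.norm_real, Real.norm_eq_abs]
    _ ≤ ‖Mc ^ t‖ := hent
    _ ≤ r ^ t := hnorm

end decay

set_option maxHeartbeats 1000000 in
open Filter in
/-- the tail of the discounted cost along the damped trajectory equals
`x_τᵀ P_K(γ) x_τ` and is bounded by `(1 − ℓ₀/ν)^τ · ν²d²/ℓ₀`. -/
theorem stmt10
    {n m p : ℕ} (hn : 1 ≤ n) (hm : 1 ≤ m) (hp : 1 ≤ p)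
    (A : Matrix (Fin n) (Fin n) ℝ) (B : Matrix (Fin n) (Fin m) ℝ) (C : Matrix (Fin p) (Fin n) ℝ)
    (Q : Matrix (Fin n) (Fin n) ℝ) (R : Matrix (Fin m) (Fin m) ℝ)
    (hQsymm : Q.IsSymm) (hRsymm : R.IsSymm)
    (ℓ₀ ℓ₁ ψ φ : ℝ) (hℓ₀ : 0 < ℓ₀) (hℓ₀₁ : ℓ₀ ≤ ℓ₁) (hψ : 1 ≤ ψ) (hφ : 1 ≤ φ)
    (hQlb : (Q - ℓ₀ • (1 : Matrix (Fin n) (Fin n) ℝ)).PosSemidef)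
    (hQub : (ℓ₁ • (1 : Matrix (Fin n) (Fin n) ℝ) - Q).PosSemidef)
    (hRlb : (R - ℓ₀ • (1 : Matrix (Fin m) (Fin m) ℝ)).PosSemidef)
    (hRub : (ℓ₁ • (1 : Matrix (Fin m) (Fin m) ℝ) - R).PosSemidef)
    (hB : spNorm B ≤ ψ) (hC : spNorm C ≤ φ)
    (γ : ℝ) (hγ : γ ∈ Set.Ioc (0 : ℝ) 1) (ν : ℝ) (hν : 0 < ν)
    (K : Matrix (Fin m) (Fin p) ℝ)
    (hK : inS A B C γ K) (hKν : Jcost A B C Q R γ K ≤ ν)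
    (d : ℝ) (hd : 0 < d) (x₀ : Fin n → ℝ) (hx₀ : vecNorm x₀ ≤ d) :
    ∀ τ : ℕ,
      (∑' s : ℕ,
          ((Real.sqrt γ • Acl A B C K) ^ (τ + s) *ᵥ x₀) ⬝ᵥ
            ((Q + Cᵀ * Kᵀ * R * K * C) *ᵥ ((Real.sqrt γ • Acl A B C K) ^ (τ + s) *ᵥ x₀))) =
        ((Real.sqrt γ • Acl A B C K) ^ τ *ᵥ x₀) ⬝ᵥ
          (Pmat A B C Q R γ K *ᵥ ((Real.sqrt γ • Acl A B C K) ^ τ *ᵥ x₀)) ∧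
      ((Real.sqrt γ • Acl A B C K) ^ τ *ᵥ x₀) ⬝ᵥ
          (Pmat A B C Q R γ K *ᵥ ((Real.sqrt γ • Acl A B C K) ^ τ *ᵥ x₀)) ≤
        (1 - ℓ₀ / ν) ^ τ * (ν ^ 2 * d ^ 2 / ℓ₀) := by
  
  classical
  have hγ0 : 0 < γ := hγ.1
  have hsγ : 0 < Real.sqrt γ := Real.sqrt_pos.2 hγ0
  set L0 : Matrix (Fin n) (Fin n) ℝ := Acl A B C K with hL0
  set M : Matrix (Fin n) (Fin n) ℝ := Q + Cᵀ * Kᵀ * R * K * C with hM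
  set L : Matrix (Fin n) (Fin n) ℝ := Real.sqrt γ • L0 with hL
  unfold inS at hK
  rw [← hL0] at hK
  -- geometric decay of the damped closed loop
  obtain ⟨ρ, hρ0, hρ1, hevL⟩ : ∃ ρ : ℝ, 0 < ρ ∧ ρ < 1 ∧
      ∀ᶠ t : ℕ in atTop, ∀ i j, |(L ^ t) i j| ≤ ρ ^ t := by
    have hσlt : specRad L0 < 1 / Real.sqrt γ := by
      rw [lt_div_iff₀ hsγ]; linarith [hK, mul_comm (Real.sqrt γ) (specRad L0)]
    set r : ℝ := (max (specRad L0) 0 + 1 / Real.sqrt γ) / 2 with hr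
    have hr0 : 0 < r := by
      have h1 : (0:ℝ) ≤ max (specRad L0) 0 := le_max_right _ _
      have h2 : 0 < 1 / Real.sqrt γ := by positivity
      rw [hr]; linarith
    have hrσ : specRad L0 < r := by
      have h1 : specRad L0 ≤ max (specRad L0) 0 := le_max_left _ _
      rw [hr]; linarith
    have hrlt : r < 1 / Real.sqrt γ := by
      have h1 : max (specRad L0) 0 < 1 / Real.sqrt γ := max_lt hσlt (by positivity)
      rw [hr]; linarith
    refine ⟨Real.sqrt γ * r, by positivity, ?_, ?_⟩
    · have h2 := mul_lt_mul_of_pos_left hrlt hsγ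
      rwa [mul_one_div, div_self hsγ.ne'] at h2
    · filter_upwards [entry_decay L0 hr0 hrσ] with t ht i j
      have h1 : L ^ t = Real.sqrt γ ^ t • L0 ^ t := smul_pow _ _ t
      rw [h1, Matrix.smul_apply, smul_eq_mul, abs_mul,
        abs_of_nonneg (by positivity : (0:ℝ) ≤ Real.sqrt γ ^ t), mul_pow]
      exact mul_le_mul_of_nonneg_left (ht i j) (by positivity)
  -- the summand family
  set F : ℕ → Matrix (Fin n) (Fin n) ℝ := fun t => (L ^ t)ᵀ * M * L ^ t with hF
  have hFt : ∀ t, γ ^ t • (L0ᵀ ^ t * M * L0 ^ t) = F t := by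
    intro t
    show γ ^ t • (L0ᵀ ^ t * M * L0 ^ t) = (L ^ t)ᵀ * M * L ^ t
    have h1 : L ^ t = Real.sqrt γ ^ t • L0 ^ t := smul_pow _ _ t
    rw [h1, Matrix.transpose_smul, smul_mul_assoc, mul_smul_comm, smul_mul_assoc, smul_smul,
      ← Matrix.transpose_pow]
    congr 1
    rw [← mul_pow, Real.mul_self_sqrt hγ0.le]
  set P : Matrix (Fin n) (Fin n) ℝ := Pmat A B C Q R γ K with hPdef
  have hP : P = ∑' t, F t := by
    rw [hPdef]
    unfold Pmat
    rw [← hL0, ← hM]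
    exact tsum_congr hFt
  -- summability
  have hFsum : Summable F := by
    refine Pi.summable.2 fun i => ?_; refine Pi.summable.2 fun j => ?_
    apply Summable.of_norm_bounded_eventually_nat
      (g := fun t => (∑ l, ∑ k, |M k l|) * (ρ ^ 2) ^ t)
    · exact (summable_geometric_of_lt_one (by positivity)
        (by nlinarith)).mul_left _
    · filter_upwards [hevL] with t ht
      have expand : F t i j = ∑ l, ∑ k, (L ^ t) k i * M k l * (L ^ t) l j := by
        show ((L ^ t)ᵀ * M * L ^ t) i j = _
        rw [Matrix.mul_apply]
        refine Finset.sum_congr rfl fun l _ => ?_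
        rw [Matrix.mul_apply, Finset.sum_mul]
        refine Finset.sum_congr rfl fun k _ => ?_
        rw [Matrix.transpose_apply]
      rw [Real.norm_eq_abs, expand]
      calc |∑ l, ∑ k, (L ^ t) k i * M k l * (L ^ t) l j|
          ≤ ∑ l, ∑ k, |(L ^ t) k i * M k l * (L ^ t) l j| :=
            (Finset.abs_sum_le_sum_abs _ _).trans
              (Finset.sum_le_sum fun l _ => Finset.abs_sum_le_sum_abs _ _)
        _ ≤ ∑ l, ∑ k, |M k l| * (ρ ^ 2) ^ t := by
            refine Finset.sum_le_sum fun l _ => Finset.sum_le_sum fun k _ => ?_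
            rw [abs_mul, abs_mul]
            have h1 := ht k i
            have h2 := ht l j
            have hrr : (ρ ^ 2) ^ t = ρ ^ t * ρ ^ t := by ring
            rw [hrr]
            have hρt : (0:ℝ) ≤ ρ ^ t := by positivity
            have h3 : |(L ^ t) k i| * |(L ^ t) l j| ≤ ρ ^ t * ρ ^ t :=
              mul_le_mul h1 h2 (abs_nonneg _) hρt
            nlinarith [abs_nonneg (M k l), abs_nonneg ((L ^ t) k i), abs_nonneg ((L ^ t) l j)]
        _ = (∑ l, ∑ k, |M k l|) * (ρ ^ 2) ^ t := by
            rw [Finset.sum_mul]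
            exact Finset.sum_congr rfl fun l _ => by rw [Finset.sum_mul]
  -- the scalar series
  set g : ℕ → ℝ := fun t => x₀ ⬝ᵥ (F t *ᵥ x₀) with hg
  have hgsum : Summable g :=
    hFsum.map (quadCLM x₀ x₀) (quadCLM x₀ x₀).continuous
  have hgs : ∀ σ : ℕ, Summable fun s => g (σ + s) := fun σ =>
    ((summable_nat_add_iff σ).2 hgsum).congr fun s => by rw [add_comm]
  -- the key identity
  have hcomp : ∀ σ t : ℕ, (L ^ σ)ᵀ * F t * L ^ σ = F (σ + t) := by
    intro σ t
    show (L ^ σ)ᵀ * ((L ^ t)ᵀ * M * L ^ t) * L ^ σ = (L ^ (σ + t))ᵀ * M * L ^ (σ + t)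
    rw [add_comm σ t, pow_add, Matrix.transpose_mul]
    simp only [Matrix.mul_assoc]
  have key : ∀ σ : ℕ, (L ^ σ *ᵥ x₀) ⬝ᵥ (P *ᵥ (L ^ σ *ᵥ x₀)) = ∑' s, g (σ + s) := by
    intro σ
    have h1 : (L ^ σ *ᵥ x₀) ⬝ᵥ (P *ᵥ (L ^ σ *ᵥ x₀))
        = quadCLM (L ^ σ *ᵥ x₀) (L ^ σ *ᵥ x₀) (∑' t, F t) := by rw [← hP]; rfl
    rw [h1, ContinuousLinearMap.map_tsum _ hFsum]
    refine tsum_congr fun t => ?_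
    rw [quadCLM_apply, ← conj_form, hcomp σ t, hg]
  have hrw : Cᵀ * Kᵀ * R * K * C = (K * C)ᵀ * R * (K * C) := by
    rw [Matrix.transpose_mul]; simp [Matrix.mul_assoc]
  have hMlb : ∀ y : Fin n → ℝ, ℓ₀ * (y ⬝ᵥ y) ≤ y ⬝ᵥ (M *ᵥ y) := by
    intro y
    have h1 := psd_form_lb hQlb y
    have h2 : 0 ≤ y ⬝ᵥ ((Cᵀ * Kᵀ * R * K * C) *ᵥ y) := by
      rw [hrw, conj_form]
      have h3 := psd_form_lb hRlb ((K * C) *ᵥ y)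
      nlinarith [dp_self_nonneg ((K * C) *ᵥ y)]
    have h4 : y ⬝ᵥ (M *ᵥ y) = y ⬝ᵥ (Q *ᵥ y) + y ⬝ᵥ ((Cᵀ * Kᵀ * R * K * C) *ᵥ y) := by
      rw [hM, Matrix.add_mulVec, dotProduct_add]
    linarith
  have hFform : ∀ (t : ℕ) (x : Fin n → ℝ),
      ℓ₀ * ((L ^ t *ᵥ x) ⬝ᵥ (L ^ t *ᵥ x)) ≤ x ⬝ᵥ (F t *ᵥ x) := by
    intro t x
    show ℓ₀ * _ ≤ x ⬝ᵥ (((L ^ t)ᵀ * M * L ^ t) *ᵥ x)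
    rw [conj_form]
    exact hMlb _
  have hFnn : ∀ (t : ℕ) (x : Fin n → ℝ), 0 ≤ x ⬝ᵥ (F t *ᵥ x) := fun t x =>
    le_trans (mul_nonneg hℓ₀.le (dp_self_nonneg _)) (hFform t x)
  have hgnn : ∀ t, 0 ≤ g t := fun t => hFnn t x₀
  -- P is positive semidefinite
  have hMsymm : Mᵀ = M := by
    have hX : ∀ W : Matrix (Fin m) (Fin n) ℝ, (Wᵀ * R * W)ᵀ = Wᵀ * R * W := fun W => by
      rw [Matrix.transpose_mul, Matrix.transpose_mul, Matrix.transpose_transpose, hRsymm.eq,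
        ← Matrix.mul_assoc]
    rw [hM, hrw, Matrix.transpose_add, hQsymm.eq, hX (K * C)]
  have hFsymm : ∀ t, (F t)ᵀ = F t := by
    intro t
    show ((L ^ t)ᵀ * M * L ^ t)ᵀ = (L ^ t)ᵀ * M * L ^ t
    rw [Matrix.transpose_mul, Matrix.transpose_mul, Matrix.transpose_transpose, hMsymm,
      ← Matrix.mul_assoc]
  have happly : ∀ i j, (∑' t, F t) i j = ∑' t, F t i j := by
    intro i j
    have e1 : (∑' t, F t) i = ∑' t, F t i := tsum_apply hFsum
    rw [e1]; exact tsum_apply (Pi.summable.1 hFsum i)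
  have hPsymm : Pᵀ = P := by
    rw [hP]
    ext i j
    rw [Matrix.transpose_apply, happly, happly]
    refine tsum_congr fun t => ?_
    have h1 : (F t)ᵀ j i = F t j i := congrFun (congrFun (hFsymm t) j) i
    rw [Matrix.transpose_apply] at h1
    exact h1.symm
  have hPpsd : P.PosSemidef := by
    refine Matrix.PosSemidef.of_dotProduct_mulVec_nonneg ?_ ?_
    · show Pᴴ = P
      have h1 : Pᴴ = Pᵀ := by ext i j; simp [Matrix.conjTranspose_apply]
      rw [h1, hPsymm]
    · intro x
      rw [star_trivial]
      have h1 : x ⬝ᵥ (P *ᵥ x) = ∑' t, x ⬝ᵥ (F t *ᵥ x) := by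
        have h2 : x ⬝ᵥ (P *ᵥ x) = quadCLM x x (∑' t, F t) := by rw [← hP]; rfl
        rw [h2, ContinuousLinearMap.map_tsum _ hFsum]
        rfl
      rw [h1]
      exact tsum_nonneg fun t => hFnn t x
  -- trace bounds
  have htrP : P.trace ≤ ν := hKν
  have htrsum : Summable fun t => (F t).trace :=
    hFsum.map (traceCLM n) (traceCLM n).continuous
  have htreq : P.trace = ∑' t, (F t).trace := by
    have h1 : P.trace = traceCLM n (∑' t, F t) := by rw [← hP]; rfl
    rw [h1, ContinuousLinearMap.map_tsum _ hFsum]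
    rfl
  have htrF : ∀ t, 0 ≤ (F t).trace := by
    intro t
    refine Finset.sum_nonneg fun i _ => ?_
    have h1 := hFnn t (Pi.single i 1)
    rwa [dp_single] at h1
  have hMii : ∀ i, ℓ₀ ≤ M i i := by
    intro i
    have h1 := hMlb (Pi.single i 1)
    rwa [dp_single, dp_single_self, mul_one] at h1
  have hF0 : F 0 = M := by
    show (L ^ 0)ᵀ * M * L ^ 0 = M
    simp
  have hℓν : ℓ₀ ≤ ν := by
    have i0 : Fin n := ⟨0, hn⟩
    have h0 : (F 0).trace ≤ P.trace := by
      rw [htreq]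
      exact htrsum.le_tsum 0 fun t _ => htrF t
    have h1 : ℓ₀ ≤ (F 0).trace := by
      rw [hF0]
      calc ℓ₀ ≤ M i0 i0 := hMii i0
        _ ≤ M.trace :=
          Finset.single_le_sum (f := fun i => M i i)
            (fun i _ => le_trans hℓ₀.le (hMii i)) (Finset.mem_univ i0)
    linarith
  -- q and its recursion
  set q : ℕ → ℝ := fun σ => ∑' s, g (σ + s) with hq
  have hrec : ∀ σ, q σ = g σ + q (σ + 1) := by
    intro σ
    show (∑' s, g (σ + s)) = g σ + ∑' s, g (σ + 1 + s)
    calc (∑' s, g (σ + s)) = g (σ + 0) + ∑' s, g (σ + (s + 1)) := (hgs σ).tsum_eq_zero_add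
      _ = g σ + ∑' s, g (σ + 1 + s) := by
          rw [add_zero]
          exact congrArg _ (tsum_congr fun s => congrArg g (by omega))
  have hqnn : ∀ σ, 0 ≤ q σ := fun σ => tsum_nonneg fun s => hgnn _
  have hq_le : ∀ σ, q σ ≤ ν * ((L ^ σ *ᵥ x₀) ⬝ᵥ (L ^ σ *ᵥ x₀)) := by
    intro σ
    calc q σ = (L ^ σ *ᵥ x₀) ⬝ᵥ (P *ᵥ (L ^ σ *ᵥ x₀)) := (key σ).symm
      _ ≤ P.trace * ((L ^ σ *ᵥ x₀) ⬝ᵥ (L ^ σ *ᵥ x₀)) := psd_form_le_trace hPpsd _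
      _ ≤ ν * ((L ^ σ *ᵥ x₀) ⬝ᵥ (L ^ σ *ᵥ x₀)) :=
        mul_le_mul_of_nonneg_right htrP (dp_self_nonneg _)
  have hglb : ∀ σ, ℓ₀ * ((L ^ σ *ᵥ x₀) ⬝ᵥ (L ^ σ *ᵥ x₀)) ≤ g σ := fun σ => hFform σ x₀
  have hfac : 0 ≤ 1 - ℓ₀ / ν := by
    have h1 : ℓ₀ / ν ≤ 1 := (div_le_one hν).2 hℓν
    linarith
  have hx2 : x₀ ⬝ᵥ x₀ ≤ d ^ 2 := by
    have hdp : x₀ ⬝ᵥ x₀ = ∑ i, x₀ i ^ 2 := by simp [dotProduct, pow_two]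
    have hs : 0 ≤ ∑ i, x₀ i ^ 2 := Finset.sum_nonneg fun i _ => sq_nonneg _
    have h := hx₀
    unfold vecNorm at h
    rw [hdp]
    nlinarith [Real.sq_sqrt hs, Real.sqrt_nonneg (∑ i, x₀ i ^ 2)]
  have hq0 : q 0 ≤ ν * d ^ 2 := by
    have h1 := hq_le 0
    rw [pow_zero, Matrix.one_mulVec] at h1
    calc q 0 ≤ ν * (x₀ ⬝ᵥ x₀) := h1
      _ ≤ ν * d ^ 2 := mul_le_mul_of_nonneg_left hx2 hν.le
  have hstep : ∀ σ, q (σ + 1) ≤ (1 - ℓ₀ / ν) * q σ := by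
    intro σ
    have hb2 := hq_le σ
    have hb1 := hglb σ
    have hgge : (ℓ₀ / ν) * q σ ≤ g σ := by
      calc (ℓ₀ / ν) * q σ ≤ (ℓ₀ / ν) * (ν * ((L ^ σ *ᵥ x₀) ⬝ᵥ (L ^ σ *ᵥ x₀))) :=
            mul_le_mul_of_nonneg_left hb2 (by positivity)
        _ = ℓ₀ * ((L ^ σ *ᵥ x₀) ⬝ᵥ (L ^ σ *ᵥ x₀)) := by field_simp
        _ ≤ g σ := hb1
    have hr1 := hrec σ
    nlinarith [hqnn σ]
  have hqb : ∀ σ, q σ ≤ (1 - ℓ₀ / ν) ^ σ * (ν * d ^ 2) := by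
    intro σ
    induction σ with
    | zero => simpa using hq0
    | succ k ih =>
      calc q (k + 1) ≤ (1 - ℓ₀ / ν) * q k := hstep k
        _ ≤ (1 - ℓ₀ / ν) * ((1 - ℓ₀ / ν) ^ k * (ν * d ^ 2)) :=
          mul_le_mul_of_nonneg_left ih hfac
        _ = (1 - ℓ₀ / ν) ^ (k + 1) * (ν * d ^ 2) := by ring
  intro τ
  constructor
  · have hLHS : (∑' s : ℕ, ((L ^ (τ + s)) *ᵥ x₀) ⬝ᵥ (M *ᵥ ((L ^ (τ + s)) *ᵥ x₀)))
        = ∑' s, g (τ + s) := by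
      refine tsum_congr fun s => ?_
      show _ = x₀ ⬝ᵥ (F (τ + s) *ᵥ x₀)
      show _ = x₀ ⬝ᵥ (((L ^ (τ + s))ᵀ * M * L ^ (τ + s)) *ᵥ x₀)
      rw [conj_form]
    rw [hLHS]; exact (key τ).symm
  · rw [key τ]
    calc (∑' s, g (τ + s)) = q τ := rfl
      _ ≤ (1 - ℓ₀ / ν) ^ τ * (ν * d ^ 2) := hqb τ
      _ ≤ (1 - ℓ₀ / ν) ^ τ * (ν ^ 2 * d ^ 2 / ℓ₀) := by
        refine mul_le_mul_of_nonneg_left ?_ (pow_nonneg hfac τ)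
        rw [le_div_iff₀ hℓ₀]
        nlinarith [mul_le_mul_of_nonneg_left hℓν (mul_nonneg hν.le (sq_nonneg d))]
end

section
/- Let γ ∈ (0,1] and K ∈ S_γ, and write J = J_γ(K). Then √γ·ρ(A − BKC) ≤ √(1 − ℓ₀/J), and for every t ∈ ℕ with t > 0, ‖(√γ(A − BKC))^t‖ ≤ √(J/ℓ₀)·(1 − ℓ₀/J)^{t/2}. -/
open Matrix

set_option maxHeartbeats 1000000

section Apriori
open scoped NNReal ENNReal
attribute [local instance] Matrix.linftyOpNormedRing Matrix.linftyOpNormedAlgebra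

lemma entry_le_linfty {n : ℕ} (A : Matrix (Fin n) (Fin n) ℂ) (i j : Fin n) :
    ‖A i j‖ ≤ ‖A‖ := by
  have h1 : ‖A i j‖₊ ≤ ∑ k, ‖A i k‖₊ :=
    Finset.single_le_sum (f := fun k => ‖A i k‖₊) (fun _ _ => by positivity) (Finset.mem_univ j)
  have h2 : (∑ k, ‖A i k‖₊) ≤ Finset.univ.sup fun i : Fin n => ∑ j, ‖A i j‖₊ :=
    Finset.le_sup (f := fun i : Fin n => ∑ j, ‖A i j‖₊) (Finset.mem_univ i)
  have h3 := h1.trans h2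
  rw [← Matrix.linfty_opNNNorm_def A] at h3
  exact_mod_cast h3

lemma apriori {n : ℕ} (hn : 1 ≤ n) (M : Matrix (Fin n) (Fin n) ℝ) (γ : ℝ) (hγ0 : 0 < γ)
    (hspec : Real.sqrt γ * specRad M < 1) :
    ∃ c : ℝ, 0 < c ∧ c < 1 ∧ ∃ Cb : ℝ, 0 ≤ Cb ∧
      ∀ (t : ℕ) (i j : Fin n), |((Real.sqrt γ • M) ^ t) i j| ≤ Cb * c ^ t := by
  haveI : Nonempty (Fin n) := ⟨⟨0, hn⟩⟩
  set a : Matrix (Fin n) (Fin n) ℂ := (Real.sqrt γ • M).map (algebraMap ℝ ℂ) with ha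
  have hsg : (0:ℝ) < Real.sqrt γ := Real.sqrt_pos.mpr hγ0
  -- spectral radius bound
  have hsr : spectralRadius ℂ a ≤ ENNReal.ofReal (Real.sqrt γ * specRad M) := by
    rw [spectralRadius]
    refine iSup₂_le fun μ hμ => ?_
    have hmap : a = ((Real.sqrt γ : ℂ)) • (M.map (algebraMap ℝ ℂ)) := by
      ext i j
      simp [ha, Matrix.map_apply, Complex.ofReal_mul]
    set u : ℂˣ := Units.mk0 (Real.sqrt γ : ℂ) (by exact_mod_cast hsg.ne')
    have hμ2 : μ ∈ spectrum ℂ (u • (M.map (algebraMap ℝ ℂ))) := by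
      rwa [Units.smul_def, Units.val_mk0, ← hmap]
    rw [spectrum.unit_smul_eq_smul] at hμ2
    obtain ⟨μ', hμ', rfl⟩ := hμ2
    have hb : ‖μ'‖ ≤ specRad M := by
      apply le_csSup
      · refine ⟨‖M.map (algebraMap ℝ ℂ)‖, ?_⟩
        rintro r ⟨ν, hν, rfl⟩
        exact spectrum.norm_le_norm_of_mem hν
      · exact ⟨μ', hμ', rfl⟩
    have : ‖u • μ'‖ = Real.sqrt γ * ‖μ'‖ := by
      rw [Units.smul_def, Units.val_mk0, norm_smul, Complex.norm_real,
        Real.norm_eq_abs, abs_of_pos hsg]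
    show (‖u • μ'‖₊ : ENNReal) ≤ ENNReal.ofReal (Real.sqrt γ * specRad M)
    rw [show (‖u • μ'‖₊ : ENNReal) = ENNReal.ofReal ‖u • μ'‖ from (ofReal_norm _).symm, this]
    exact ENNReal.ofReal_le_ofReal (by nlinarith [hb, hsg.le])
  have hlt : spectralRadius ℂ a < 1 :=
    lt_of_le_of_lt hsr (by
      rw [ENNReal.ofReal_lt_one]; exact hspec)
  obtain ⟨c', hc'1, hc'2⟩ := exists_between hlt
  have hc'top : c' ≠ ⊤ := (hc'2.trans_le le_top).ne
  set c : ℝ := max c'.toReal (1/2) with hc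
  have hc0 : (0:ℝ) < c := lt_max_of_lt_right one_half_pos
  have hc1 : c < 1 := by
    apply max_lt _ (by norm_num)
    have := (ENNReal.toReal_lt_toReal hc'top (by simp)).mpr hc'2
    simpa using this
  have htend := spectrum.pow_nnnorm_pow_one_div_tendsto_nhds_spectralRadius a
  have hev : ∀ᶠ t : ℕ in Filter.atTop, (‖a ^ t‖₊ : ℝ≥0∞) ^ (1/(t:ℝ)) < c' :=
    htend.eventually_lt_const hc'1
  obtain ⟨N, hN⟩ := Filter.eventually_atTop.mp hev
  have hgeo : ∀ t : ℕ, N + 1 ≤ t → ‖a ^ t‖ ≤ c ^ t := by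
    intro t ht
    have ht0 : (t:ℝ) ≠ 0 := Nat.cast_ne_zero.mpr (by omega)
    have h := hN t (le_trans (Nat.le_succ N) ht)
    have h2 : ((‖a ^ t‖₊ : ℝ≥0∞) ^ (1/(t:ℝ))) ^ (t:ℝ) < c' ^ (t:ℝ) :=
      ENNReal.rpow_lt_rpow h (by positivity)
    rw [← ENNReal.rpow_mul, one_div_mul_cancel ht0, ENNReal.rpow_one] at h2
    have h3 : (‖a ^ t‖₊ : ℝ≥0∞) < c' ^ t := by
      rwa [ENNReal.rpow_natCast] at h2
    have h4 : ‖a ^ t‖ ≤ c'.toReal ^ t := by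
      have := ENNReal.toReal_le_toReal (by simp) (by
        exact ENNReal.pow_ne_top hc'top) |>.mpr h3.le
      simpa [ENNReal.toReal_pow] using this
    exact h4.trans (pow_le_pow_left₀ (ENNReal.toReal_nonneg) (le_max_left _ _) t)
  set Cb : ℝ := max 1 (∑ t ∈ Finset.range (N+1), ‖a ^ t‖ / c ^ t) with hCb
  have hCb1 : (1:ℝ) ≤ Cb := le_max_left _ _
  refine ⟨c, hc0, hc1, Cb, by linarith, ?_⟩
  intro t i j
  have hpow : a ^ t = (((Real.sqrt γ • M) ^ t).map (algebraMap ℝ ℂ)) := by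
    have := map_pow ((algebraMap ℝ ℂ).mapMatrix) (Real.sqrt γ • M) t
    rw [ha]
    simpa [RingHom.mapMatrix_apply] using this.symm
  have hentry : |((Real.sqrt γ • M) ^ t) i j| ≤ ‖a ^ t‖ := by
    have h0 := entry_le_linfty (a ^ t) i j
    have hcoe : (a ^ t) i j = ((((Real.sqrt γ • M) ^ t) i j : ℝ) : ℂ) := by rw [hpow]; rfl
    rw [hcoe, Complex.norm_real, Real.norm_eq_abs] at h0
    exact h0
  rcases le_or_gt (N+1) t with h | h
  · calc |((Real.sqrt γ • M) ^ t) i j| ≤ ‖a ^ t‖ := hentry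
      _ ≤ c ^ t := hgeo t h
      _ ≤ Cb * c ^ t := le_mul_of_one_le_left (by positivity) hCb1
  · have hmem : t ∈ Finset.range (N+1) := Finset.mem_range.mpr h
    have : ‖a ^ t‖ / c ^ t ≤ Cb := by
      refine le_trans ?_ (le_max_right _ _)
      exact Finset.single_le_sum (f := fun t => ‖a ^ t‖ / c ^ t)
        (fun k _ => by positivity) hmem
    have h5 : ‖a ^ t‖ ≤ Cb * c ^ t := by
      rw [div_le_iff₀ (by positivity)] at this
      linarith
    exact hentry.trans h5

end Apriori

lemma euclid_norm {a : ℕ} (v : EuclideanSpace ℝ (Fin a)) :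
    ‖v‖ = Real.sqrt (∑ i, (v i) ^ 2) := by
  rw [EuclideanSpace.norm_eq]
  congr 1
  exact Finset.sum_congr rfl fun i _ => by rw [Real.norm_eq_abs, sq_abs]

lemma spNorm_le_of_bound {a b : ℕ} (M : Matrix (Fin a) (Fin b) ℝ) (c : ℝ) (hc : 0 ≤ c)
    (h : ∀ x : Fin b → ℝ, Real.sqrt (∑ i, ((M *ᵥ x) i) ^ 2) ≤ c * Real.sqrt (∑ i, (x i) ^ 2)) :
    spNorm M ≤ c := by
  refine ContinuousLinearMap.opNorm_le_bound _ hc fun v => ?_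
  rw [LinearMap.coe_toContinuousLinearMap']
  rw [Matrix.toEuclideanLin_apply]
  have h1 : ‖WithLp.toLp 2 (M *ᵥ v.ofLp)‖
      = Real.sqrt (∑ i, ((M *ᵥ v.ofLp) i) ^ 2) := by
    rw [euclid_norm]
  rw [h1, euclid_norm]
  exact h _

lemma mulVec_le_spNorm {a b : ℕ} (M : Matrix (Fin a) (Fin b) ℝ) (x : Fin b → ℝ) :
    Real.sqrt (∑ i, ((M *ᵥ x) i) ^ 2) ≤ spNorm M * Real.sqrt (∑ i, (x i) ^ 2) := by
  have := (LinearMap.toContinuousLinearMap (Matrix.toEuclideanLin M)).le_opNorm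
    ((WithLp.equiv 2 (Fin b → ℝ)).symm x)
  rw [LinearMap.coe_toContinuousLinearMap', Matrix.toEuclideanLin_apply] at this
  have h1 : ‖WithLp.toLp 2 (M *ᵥ ((WithLp.equiv 2 (Fin b → ℝ)).symm x).ofLp)‖
      = Real.sqrt (∑ i, ((M *ᵥ x) i) ^ 2) := by
    rw [euclid_norm]
    rfl
  have h2 : ‖(WithLp.equiv 2 (Fin b → ℝ)).symm x‖ = Real.sqrt (∑ i, (x i) ^ 2) := by
    rw [euclid_norm]; rfl
  rw [h1, h2] at this
  exact this

lemma sqrt_pow_nat (x : ℝ) (hx : 0 ≤ x) : ∀ t : ℕ, Real.sqrt (x ^ t) = Real.sqrt x ^ t := by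
  intro t
  induction t with
  | zero => simp
  | succ t ih => rw [pow_succ, Real.sqrt_mul (pow_nonneg hx t), ih, pow_succ]


open scoped MatrixOrder in
theorem keyLemma {n : ℕ} (hn : 1 ≤ n) (L X : Matrix (Fin n) (Fin n) ℝ) (ℓ₀ : ℝ) (hℓ₀ : 0 < ℓ₀)
    (hXpsd : X.PosSemidef)
    (hXlb : ∀ x : Fin n → ℝ, ℓ₀ * (∑ i, (x i) ^ 2) ≤ x ⬝ᵥ X *ᵥ x)
    (γ : ℝ) (hγ0 : 0 < γ)
    (hspec : Real.sqrt γ * specRad L < 1) :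
    ∀ J : ℝ, J = (∑' t : ℕ, γ ^ t • (Lᵀ ^ t * X * L ^ t)).trace →
    Real.sqrt γ * specRad L ≤ Real.sqrt (1 - ℓ₀ / J) ∧
      ∀ t : ℕ, 0 < t → spNorm ((Real.sqrt γ • L) ^ t) ≤
        Real.sqrt (J / ℓ₀) * Real.sqrt (1 - ℓ₀ / J) ^ t := by
  intro J hJdef
  obtain ⟨c, hc0, hc1, Cb, hCb0, hbd⟩ := apriori hn L γ hγ0 hspec
  set sg := Real.sqrt γ with hsg
  have hsg0 : 0 < sg := Real.sqrt_pos.mpr hγ0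
  have hsgsq : sg * sg = γ := Real.mul_self_sqrt hγ0.le
  set Lg : Matrix (Fin n) (Fin n) ℝ := sg • L with hLg
  set F : ℕ → Matrix (Fin n) (Fin n) ℝ := fun t => γ ^ t • (Lᵀ ^ t * X * L ^ t) with hFdef
  -- F t = (Lg^t)ᵀ * X * Lg^t
  have hF : ∀ t, F t = (Lg ^ t)ᵀ * X * Lg ^ t := by
    intro t
    rw [hFdef]
    simp only [hLg, smul_pow, Matrix.transpose_smul, Matrix.smul_mul, Matrix.mul_smul,
      smul_smul, Matrix.transpose_pow]
    rw [← mul_pow, hsgsq]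
  -- quadratic form identity
  have hFq : ∀ (t : ℕ) (x : Fin n → ℝ),
      x ⬝ᵥ F t *ᵥ x = (Lg ^ t *ᵥ x) ⬝ᵥ X *ᵥ (Lg ^ t *ᵥ x) := by
    intro t x
    rw [hF t, ← Matrix.mulVec_mulVec, ← Matrix.mulVec_mulVec, Matrix.dotProduct_mulVec x,
      Matrix.vecMul_transpose]
  -- entry bounds and summability
  have hentry : ∀ (t : ℕ) (i j : Fin n),
      |F t i j| ≤ (Cb * Cb * ∑ k, ∑ l, |X k l|) * (c ^ 2) ^ t := by
    intro t i j
    have hFe : F t i j = ∑ l, ∑ k, (Lg ^ t) k i * X k l * (Lg ^ t) l j := by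
      rw [hF t, Matrix.mul_apply]
      refine Finset.sum_congr rfl fun l _ => ?_
      rw [Matrix.mul_apply, Finset.sum_mul]
      refine Finset.sum_congr rfl fun k _ => ?_
      rw [Matrix.transpose_apply]
    rw [hFe]
    calc |∑ l, ∑ k, (Lg ^ t) k i * X k l * (Lg ^ t) l j|
        ≤ ∑ l, ∑ k, |(Lg ^ t) k i * X k l * (Lg ^ t) l j| := by
          refine (Finset.abs_sum_le_sum_abs _ _).trans (Finset.sum_le_sum fun l _ => ?_)
          exact Finset.abs_sum_le_sum_abs _ _
      _ ≤ ∑ l, ∑ k : Fin n, (Cb * c ^ t) * |X k l| * (Cb * c ^ t) := by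
          refine Finset.sum_le_sum fun l _ => Finset.sum_le_sum fun k _ => ?_
          rw [abs_mul, abs_mul]
          have h1 := hbd t k i
          have h2 := hbd t l j
          have hnn : (0:ℝ) ≤ c ^ t := by positivity
          refine mul_le_mul (mul_le_mul h1 le_rfl (abs_nonneg _) (by positivity)) h2
            (abs_nonneg _) (by positivity)
      _ = (∑ l, ∑ k, |X k l|) * ((Cb * c ^ t) * (Cb * c ^ t)) := by
          rw [Finset.sum_mul]
          refine Finset.sum_congr rfl fun l _ => ?_
          rw [Finset.sum_mul]
          refine Finset.sum_congr rfl fun k _ => ?_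
          ring
      _ = (Cb * Cb * ∑ k, ∑ l, |X k l|) * (c ^ 2) ^ t := by
          rw [Finset.sum_comm, show (c ^ 2) ^ t = c ^ t * c ^ t by
            rw [← pow_mul, mul_comm 2 t, pow_mul, sq]]
          ring
  have hgeo : Summable (fun t : ℕ => (Cb * Cb * ∑ k, ∑ l, |X k l|) * (c ^ 2) ^ t) := by
    apply Summable.mul_left
    apply summable_geometric_of_lt_one (by positivity)
    calc c ^ 2 ≤ c := by nlinarith
      _ < 1 := hc1
  have hsumE : ∀ i j : Fin n, Summable (fun t => F t i j) := by
    intro i j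
    apply Summable.of_norm_bounded hgeo
    intro t
    simpa [Real.norm_eq_abs] using hentry t i j
  have hsumF : Summable F := by
    have : ∀ i : Fin n, Summable (fun t => F t i) := fun i => Pi.summable.mpr (hsumE i)
    exact Pi.summable.mpr this
  set P : Matrix (Fin n) (Fin n) ℝ := ∑' t, F t with hPdef
  have hPapp : ∀ i j : Fin n, P i j = ∑' t, F t i j := by
    intro i j
    rw [hPdef]
    have h1 : (∑' t, F t) i = ∑' t, F t i := tsum_apply hsumF
    rw [h1]
    exact tsum_apply (Pi.summable.mp hsumF i)
  -- HasSum of quadratic forms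
  have hq : ∀ x : Fin n → ℝ,
      HasSum (fun t => (Lg ^ t *ᵥ x) ⬝ᵥ X *ᵥ (Lg ^ t *ᵥ x)) (x ⬝ᵥ P *ᵥ x) := by
    intro x
    have hqe : ∀ (M : Matrix (Fin n) (Fin n) ℝ),
        x ⬝ᵥ M *ᵥ x = ∑ i, ∑ j, x i * M i j * x j := by
      intro M
      simp only [dotProduct, Matrix.mulVec, dotProduct, Finset.mul_sum]
      exact Finset.sum_congr rfl fun i _ => Finset.sum_congr rfl fun j _ => by ring
    have h1 : HasSum (fun t => x ⬝ᵥ F t *ᵥ x) (x ⬝ᵥ P *ᵥ x) := by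
      simp only [hqe]
      apply hasSum_sum
      intro i _
      apply hasSum_sum
      intro j _
      have : HasSum (fun t => F t i j) (P i j) := by
        rw [hPapp i j]
        exact (hsumE i j).hasSum
      exact (this.mul_left (x i)).mul_right (x j)
    simpa only [hFq] using h1
  -- nonnegativity of the quadratic form of X over ℝ
  have hXnn : ∀ y : Fin n → ℝ, 0 ≤ y ⬝ᵥ X *ᵥ y := by
    intro y
    simpa using hXpsd.dotProduct_mulVec_nonneg y
  -- lower bound for P-quadratic form
  have hPlb : ∀ x : Fin n → ℝ, ℓ₀ * (∑ i, (x i) ^ 2) ≤ x ⬝ᵥ P *ᵥ x := by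
    intro x
    have h0 := le_hasSum (hq x) 0 (fun t _ => hXnn _)
    simp only [pow_zero, Matrix.one_mulVec] at h0
    exact (hXlb x).trans h0
  -- P is positive semidefinite
  have hPsymm : Pᵀ = P := by
    rw [hPdef, Matrix.transpose_tsum]
    congr 1
    ext t
    have hXsymm : Xᵀ = X := by
      have := hXpsd.1
      rwa [Matrix.IsHermitian, Matrix.conjTranspose_eq_transpose_of_trivial] at this
    rw [hFdef]
    simp only [Matrix.transpose_smul, Matrix.transpose_mul, Matrix.transpose_transpose,
      Matrix.transpose_pow, hXsymm, Matrix.mul_assoc]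
  have hPpsd : P.PosSemidef := by
    refine Matrix.PosSemidef.of_dotProduct_mulVec_nonneg ?_ ?_
    · rw [Matrix.IsHermitian, Matrix.conjTranspose_eq_transpose_of_trivial]
      exact hPsymm
    · intro x
      have h0 := le_hasSum (hq x) 0 (fun t _ => hXnn _)
      simp only [pow_zero, Matrix.one_mulVec] at h0
      have h1 : (0:ℝ) ≤ x ⬝ᵥ P *ᵥ x := le_trans (hXnn x) h0
      simpa using h1
  -- trace facts
  have hJtr : J = ∑ i, P i i := by rw [hJdef]; rfl
  have hdiag : ∀ i : Fin n, ℓ₀ ≤ P i i := by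
    intro i
    have hsingle : ∑ k, (Pi.single i 1 : Fin n → ℝ) k ^ 2 = 1 := by
      simp [Pi.single_apply, Finset.sum_ite_eq']
    have h1 := hPlb (Pi.single i 1)
    rw [hsingle, mul_one] at h1
    have h2 : (Pi.single i 1 : Fin n → ℝ) ⬝ᵥ P *ᵥ (Pi.single i 1) = P i i := by
      simp [dotProduct, Matrix.mulVec, Pi.single_apply, Finset.sum_ite_eq']
    linarith [h1, h2.symm.le, h2.le]
  have hdiag_nn : ∀ i : Fin n, 0 ≤ P i i := fun i => le_trans hℓ₀.le (hdiag i)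
  have hJ_lb : ℓ₀ ≤ J := by
    rw [hJtr]
    calc ℓ₀ ≤ P ⟨0, hn⟩ ⟨0, hn⟩ := hdiag ⟨0, hn⟩
      _ ≤ ∑ i, P i i :=
        Finset.single_le_sum (fun i _ => hdiag_nn i) (Finset.mem_univ _)
  have hJ0 : 0 < J := lt_of_lt_of_le hℓ₀ hJ_lb
  -- upper bound: x ⬝ᵥ P x ≤ J * ∑ x i ^2  via sqrt of P
  have hPub : ∀ x : Fin n → ℝ, x ⬝ᵥ P *ᵥ x ≤ J * ∑ i, (x i) ^ 2 := by
    intro x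
    set S := CFC.sqrt P with hSdef
    have hSS : S * S = P := CFC.sqrt_mul_sqrt_self P hPpsd.nonneg
    have hSsymm : Sᵀ = S := by
      have := (Matrix.nonneg_iff_posSemidef.mp (CFC.sqrt_nonneg P)).1
      rwa [Matrix.IsHermitian, Matrix.conjTranspose_eq_transpose_of_trivial] at this
    have h1 : x ⬝ᵥ P *ᵥ x = ∑ i, ((S *ᵥ x) i) ^ 2 := by
      rw [← hSS, ← Matrix.mulVec_mulVec, Matrix.dotProduct_mulVec x]
      rw [show x ᵥ* S = S *ᵥ x by rw [← Matrix.mulVec_transpose, hSsymm]]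
      simp [dotProduct, pow_two]
    have h2 : ∀ i, ((S *ᵥ x) i) ^ 2 ≤ (∑ j, (S i j) ^ 2) * ∑ j, (x j) ^ 2 := by
      intro i
      have := Finset.sum_mul_sq_le_sq_mul_sq Finset.univ (fun j => S i j) x
      simpa [Matrix.mulVec, dotProduct] using this
    have h3 : ∑ i, ∑ j, (S i j) ^ 2 = J := by
      rw [hJtr, ← hSS]
      refine Finset.sum_congr rfl fun i _ => ?_
      rw [Matrix.mul_apply]
      refine Finset.sum_congr rfl fun j _ => ?_
      rw [pow_two]
      congr 1
      exact congrFun (congrFun hSsymm.symm j) i |>.symm ▸ rfl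
    calc x ⬝ᵥ P *ᵥ x = ∑ i, ((S *ᵥ x) i) ^ 2 := h1
      _ ≤ ∑ i, (∑ j, (S i j) ^ 2) * ∑ j, (x j) ^ 2 := Finset.sum_le_sum fun i _ => h2 i
      _ = (∑ i, ∑ j, (S i j) ^ 2) * ∑ j, (x j) ^ 2 := by rw [Finset.sum_mul]
      _ = J * ∑ j, (x j) ^ 2 := by rw [h3]
  set r2 : ℝ := 1 - ℓ₀ / J with hr2
  have hr2_nn : 0 ≤ r2 := by
    rw [hr2]
    have : ℓ₀ / J ≤ 1 := (div_le_one hJ0).mpr hJ_lb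
    linarith
  -- one-step contraction
  have hstep : ∀ x : Fin n → ℝ, (Lg *ᵥ x) ⬝ᵥ P *ᵥ (Lg *ᵥ x) ≤ r2 * (x ⬝ᵥ P *ᵥ x) := by
    intro x
    have hshift : HasSum (fun t => (Lg ^ (t+1) *ᵥ x) ⬝ᵥ X *ᵥ (Lg ^ (t+1) *ᵥ x))
        ((x ⬝ᵥ P *ᵥ x) - ∑ t ∈ Finset.range 1, (Lg ^ t *ᵥ x) ⬝ᵥ X *ᵥ (Lg ^ t *ᵥ x)) :=
      (hasSum_nat_add_iff' 1).mpr (hq x)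
    have heq : (fun t => (Lg ^ (t+1) *ᵥ x) ⬝ᵥ X *ᵥ (Lg ^ (t+1) *ᵥ x))
        = (fun t => (Lg ^ t *ᵥ (Lg *ᵥ x)) ⬝ᵥ X *ᵥ (Lg ^ t *ᵥ (Lg *ᵥ x))) := by
      funext t
      rw [pow_succ, ← Matrix.mulVec_mulVec]
    rw [heq] at hshift
    have huniq : (Lg *ᵥ x) ⬝ᵥ P *ᵥ (Lg *ᵥ x)
        = (x ⬝ᵥ P *ᵥ x) - (x ⬝ᵥ X *ᵥ x) := by
      have := (hq (Lg *ᵥ x)).unique hshift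
      simpa [pow_zero, Matrix.one_mulVec] using this
    rw [huniq, hr2]
    have h1 : ℓ₀ / J * (x ⬝ᵥ P *ᵥ x) ≤ ℓ₀ * ∑ i, (x i) ^ 2 := by
      rw [div_mul_eq_mul_div, div_le_iff₀ hJ0]
      calc ℓ₀ * (x ⬝ᵥ P *ᵥ x) ≤ ℓ₀ * (J * ∑ i, (x i) ^ 2) :=
            mul_le_mul_of_nonneg_left (hPub x) hℓ₀.le
        _ = ℓ₀ * (∑ i, (x i) ^ 2) * J := by ring
    have h2 := (h1.trans (hXlb x))
    have h3 : (1 - ℓ₀ / J) * (x ⬝ᵥ P *ᵥ x) = x ⬝ᵥ P *ᵥ x - ℓ₀ / J * (x ⬝ᵥ P *ᵥ x) := by ring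
    rw [h3]
    linarith
  -- iterate
  have hiter : ∀ (t : ℕ) (x : Fin n → ℝ),
      (Lg ^ t *ᵥ x) ⬝ᵥ P *ᵥ (Lg ^ t *ᵥ x) ≤ r2 ^ t * (x ⬝ᵥ P *ᵥ x) := by
    intro t
    induction t with
    | zero => intro x; simp [Matrix.one_mulVec]
    | succ t ih =>
      intro x
      have h1 : Lg ^ (t+1) *ᵥ x = Lg ^ t *ᵥ (Lg *ᵥ x) := by
        rw [pow_succ, ← Matrix.mulVec_mulVec]
      rw [h1]
      calc (Lg ^ t *ᵥ (Lg *ᵥ x)) ⬝ᵥ P *ᵥ (Lg ^ t *ᵥ (Lg *ᵥ x))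
          ≤ r2 ^ t * ((Lg *ᵥ x) ⬝ᵥ P *ᵥ (Lg *ᵥ x)) := ih (Lg *ᵥ x)
        _ ≤ r2 ^ t * (r2 * (x ⬝ᵥ P *ᵥ x)) :=
            mul_le_mul_of_nonneg_left (hstep x) (by positivity)
        _ = r2 ^ (t+1) * (x ⬝ᵥ P *ᵥ x) := by ring
  -- main norm bound, for all t
  have hnormsq : ∀ (t : ℕ) (x : Fin n → ℝ),
      ∑ i, ((Lg ^ t *ᵥ x) i) ^ 2 ≤ (J / ℓ₀) * r2 ^ t * ∑ i, (x i) ^ 2 := by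
    intro t x
    have h1 := hPlb (Lg ^ t *ᵥ x)
    have h2 := hiter t x
    have h3 := hPub x
    have h4 : ℓ₀ * ∑ i, ((Lg ^ t *ᵥ x) i) ^ 2 ≤ r2 ^ t * (J * ∑ i, (x i) ^ 2) := by
      calc ℓ₀ * ∑ i, ((Lg ^ t *ᵥ x) i) ^ 2 ≤ (Lg ^ t *ᵥ x) ⬝ᵥ P *ᵥ (Lg ^ t *ᵥ x) := h1
        _ ≤ r2 ^ t * (x ⬝ᵥ P *ᵥ x) := h2
        _ ≤ r2 ^ t * (J * ∑ i, (x i) ^ 2) := mul_le_mul_of_nonneg_left h3 (by positivity)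
    rw [← le_div_iff₀' hℓ₀] at h4
    calc ∑ i, ((Lg ^ t *ᵥ x) i) ^ 2 ≤ r2 ^ t * (J * ∑ i, (x i) ^ 2) / ℓ₀ := h4
      _ = (J / ℓ₀) * r2 ^ t * ∑ i, (x i) ^ 2 := by
          field_simp
  have hpart2 : ∀ t : ℕ, spNorm (Lg ^ t) ≤ Real.sqrt (J / ℓ₀) * Real.sqrt r2 ^ t := by
    intro t
    apply spNorm_le_of_bound _ _ (by positivity)
    intro x
    have h1 := hnormsq t x
    have h2 : Real.sqrt (∑ i, ((Lg ^ t *ᵥ x) i) ^ 2)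
        ≤ Real.sqrt ((J / ℓ₀) * r2 ^ t * ∑ i, (x i) ^ 2) := Real.sqrt_le_sqrt h1
    calc Real.sqrt (∑ i, ((Lg ^ t *ᵥ x) i) ^ 2)
        ≤ Real.sqrt ((J / ℓ₀) * r2 ^ t * ∑ i, (x i) ^ 2) := h2
      _ = Real.sqrt (J / ℓ₀) * Real.sqrt r2 ^ t * Real.sqrt (∑ i, (x i) ^ 2) := by
          rw [Real.sqrt_mul (by positivity), Real.sqrt_mul (by positivity),
            sqrt_pow_nat r2 hr2_nn t]
  -- part 1 : spectral radius bound
  have hpart1 : sg * specRad L ≤ Real.sqrt r2 := by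
    set r : ℝ := Real.sqrt r2 with hr
    have hr_nn : 0 ≤ r := Real.sqrt_nonneg _
    have heig : ∀ μ : ℂ, μ ∈ spectrum ℂ (L.map (algebraMap ℝ ℂ)) → sg * ‖μ‖ ≤ r := by
      intro μ hμ
      -- eigenvector
      set N : Matrix (Fin n) (Fin n) ℂ := L.map (algebraMap ℝ ℂ) with hN
      rw [spectrum.mem_iff] at hμ
      have hdet : (algebraMap ℂ (Matrix (Fin n) (Fin n) ℂ) μ - N).det = 0 := by
        by_contra hd
        exact hμ ((Matrix.isUnit_iff_isUnit_det _).mpr (isUnit_iff_ne_zero.mpr hd))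
      obtain ⟨v, hv_ne, hv⟩ := (Matrix.exists_mulVec_eq_zero_iff).mpr hdet
      have heigen : N *ᵥ v = μ • v := by
        have h1 : (algebraMap ℂ (Matrix (Fin n) (Fin n) ℂ) μ) *ᵥ v - N *ᵥ v = 0 := by
          rw [← Matrix.sub_mulVec]; exact hv
        have h2 : (algebraMap ℂ (Matrix (Fin n) (Fin n) ℂ) μ) *ᵥ v = μ • v := by
          rw [Algebra.algebraMap_eq_smul_one, Matrix.smul_mulVec, Matrix.one_mulVec]
        rw [h2] at h1
        exact (sub_eq_zero.mp h1).symm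
      -- iterated eigen-equation
      have hNpow : ∀ t : ℕ, N ^ t *ᵥ v = μ ^ t • v := by
        intro t
        induction t with
        | zero => simp [Matrix.one_mulVec]
        | succ t ih =>
          rw [pow_succ', ← Matrix.mulVec_mulVec, ih, Matrix.mulVec_smul, heigen,
            smul_smul, ← pow_succ]
      -- complex norms
      set cns : (Fin n → ℂ) → ℝ := fun w => ∑ i, ‖w i‖ ^ 2 with hcns
      have hcns_pos : 0 < cns v := by
        obtain ⟨i, hi⟩ := Function.ne_iff.mp hv_ne
        refine Finset.sum_pos' (fun j _ => by positivity) ⟨i, Finset.mem_univ i, ?_⟩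
        have hvi : v i ≠ 0 := by simpa using hi
        have : 0 < ‖v i‖ := norm_pos_iff.mpr hvi
        positivity
      -- real/imaginary splitting bound
      have hmap_bound : ∀ (Mr : Matrix (Fin n) (Fin n) ℝ) (w : Fin n → ℂ),
          cns ((Mr.map (algebraMap ℝ ℂ)) *ᵥ w) ≤ (spNorm Mr) ^ 2 * cns w := by
        intro Mr w
        set wre : Fin n → ℝ := fun i => (w i).re with hwre
        set wim : Fin n → ℝ := fun i => (w i).im with hwim
        have hnormsplit : ∀ z : ℂ, ‖z‖ ^ 2 = z.re ^ 2 + z.im ^ 2 := by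
          intro z
          rw [Complex.sq_norm, Complex.normSq_apply]
          ring
        have hre : ∀ i, (((Mr.map (algebraMap ℝ ℂ)) *ᵥ w) i).re = (Mr *ᵥ wre) i := by
          intro i
          simp [Matrix.mulVec, dotProduct, Complex.re_sum, Complex.mul_re,
            Matrix.map_apply, hwre]
        have him : ∀ i, (((Mr.map (algebraMap ℝ ℂ)) *ᵥ w) i).im = (Mr *ᵥ wim) i := by
          intro i
          simp [Matrix.mulVec, dotProduct, Complex.im_sum, Complex.mul_im,
            Matrix.map_apply, hwim]
        have hsp_nn : 0 ≤ spNorm Mr := by unfold spNorm; exact norm_nonneg _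
        have hsq : ∀ (y : Fin n → ℝ),
            ∑ i, ((Mr *ᵥ y) i) ^ 2 ≤ (spNorm Mr) ^ 2 * ∑ i, (y i) ^ 2 := by
          intro y
          have h1 := mulVec_le_spNorm Mr y
          have h2 : (0:ℝ) ≤ Real.sqrt (∑ i, ((Mr *ᵥ y) i) ^ 2) := Real.sqrt_nonneg _
          have h3 := pow_le_pow_left₀ h2 h1 2
          rw [Real.sq_sqrt (by positivity), mul_pow, Real.sq_sqrt (by positivity)] at h3
          exact h3
        have hcns_split : cns ((Mr.map (algebraMap ℝ ℂ)) *ᵥ w)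
            = ∑ i, ((Mr *ᵥ wre) i) ^ 2 + ∑ i, ((Mr *ᵥ wim) i) ^ 2 := by
          rw [hcns, ← Finset.sum_add_distrib]
          refine Finset.sum_congr rfl fun i _ => ?_
          rw [hnormsplit, hre i, him i]
        have hcns_w : cns w = ∑ i, (wre i) ^ 2 + ∑ i, (wim i) ^ 2 := by
          rw [hcns, ← Finset.sum_add_distrib]
          exact Finset.sum_congr rfl fun i _ => hnormsplit (w i)
        rw [hcns_split, hcns_w, mul_add]
        exact add_le_add (hsq wre) (hsq wim)
      -- key inequality for all positive t
      have hJl0 : (0:ℝ) ≤ J / ℓ₀ := by positivity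
      have hkey : ∀ t : ℕ, 0 < t → (sg * ‖μ‖) ^ t ≤ Real.sqrt (J / ℓ₀) * r ^ t := by
        intro t ht
        have hmp : (Lg ^ t).map (algebraMap ℝ ℂ) = ((sg:ℂ) • N) ^ t := by
          have h2 : Lg.map (algebraMap ℝ ℂ) = (sg:ℂ) • N := by
            ext i j
            simp [hLg, Matrix.map_apply, hN, Complex.ofReal_mul]
          have h3 := map_pow ((algebraMap ℝ ℂ).mapMatrix) Lg t
          simp only [RingHom.mapMatrix_apply] at h3
          rw [h3, h2]
        have h1 : ((Lg ^ t).map (algebraMap ℝ ℂ)) *ᵥ v = ((sg:ℂ) ^ t * μ ^ t) • v := by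
          rw [hmp, smul_pow, Matrix.smul_mulVec, hNpow t, smul_smul]
        have h2 : cns (((Lg ^ t).map (algebraMap ℝ ℂ)) *ᵥ v)
            = ((sg * ‖μ‖) ^ t) ^ 2 * cns v := by
          rw [h1, hcns]
          simp only [Pi.smul_apply, norm_smul, mul_pow, ← Finset.mul_sum]
          congr 1
          rw [norm_mul, norm_pow, norm_pow, Complex.norm_real, Real.norm_eq_abs,
            abs_of_pos hsg0]
          ring
        have h3 := hmap_bound (Lg ^ t) v
        rw [h2] at h3
        have h4 : (spNorm (Lg ^ t)) ^ 2 ≤ (Real.sqrt (J / ℓ₀) * r ^ t) ^ 2 := by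
          have hsp_nn : 0 ≤ spNorm (Lg ^ t) := by unfold spNorm; exact norm_nonneg _
          exact pow_le_pow_left₀ hsp_nn (hpart2 t) 2
        have h5 : ((sg * ‖μ‖) ^ t) ^ 2 * cns v ≤ (Real.sqrt (J / ℓ₀) * r ^ t) ^ 2 * cns v :=
          h3.trans (mul_le_mul_of_nonneg_right h4 hcns_pos.le)
        have h6 : ((sg * ‖μ‖) ^ t) ^ 2 ≤ (Real.sqrt (J / ℓ₀) * r ^ t) ^ 2 :=
          le_of_mul_le_mul_right h5 hcns_pos
        have h7 : (0:ℝ) ≤ (sg * ‖μ‖) ^ t := by positivity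
        have h8 : (0:ℝ) ≤ Real.sqrt (J / ℓ₀) * r ^ t := by positivity
        exact (pow_le_pow_iff_left₀ h7 h8 (by norm_num)).mp h6
      -- limit argument
      set CJ : ℝ := Real.sqrt (J / ℓ₀) with hCJ
      by_contra hcon
      push_neg at hcon
      have hx0 : 0 < sg * ‖μ‖ := lt_of_le_of_lt hr_nn hcon
      rcases eq_or_lt_of_le hr_nn with h0 | hrpos
      · have h1 := hkey 1 one_pos
        rw [pow_one, pow_one, ← h0, mul_zero] at h1
        linarith
      · set x := sg * ‖μ‖ with hx
        have hy : 1 < x / r := (one_lt_div hrpos).mpr hcon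
        obtain ⟨t, hgt⟩ := pow_unbounded_of_one_lt (max CJ 1) hy
        have ht1 : 0 < t := by
          rcases Nat.eq_zero_or_pos t with rfl | h
          · rw [pow_zero] at hgt
            exact absurd hgt (not_lt.mpr (le_max_right _ _))
          · exact h
        have hk := hkey t ht1
        have hrt : 0 < r ^ t := pow_pos hrpos t
        rw [div_pow, lt_div_iff₀ hrt] at hgt
        have h2 : x ^ t ≤ max CJ 1 * r ^ t :=
          hk.trans (mul_le_mul_of_nonneg_right (le_max_left _ _) hrt.le)
        linarith
    -- conclude via sSup
    have hub : ∀ s ∈ {s : ℝ | ∃ μ ∈ spectrum ℂ (L.map (algebraMap ℝ ℂ)), s = ‖μ‖},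
        s ≤ r / sg := by
      rintro s ⟨μ, hμ, rfl⟩
      rw [le_div_iff₀' hsg0]
      exact heig μ hμ
    have hsup : specRad L ≤ r / sg := Real.sSup_le hub (div_nonneg hr_nn hsg0.le)
    calc sg * specRad L ≤ sg * (r / sg) := mul_le_mul_of_nonneg_left hsup hsg0.le
      _ = r := by field_simp
  exact ⟨hpart1, fun t _ => hpart2 t⟩

/-- `√γ·ρ(A−BKC) ≤ √(1 − ℓ₀/J)` and
`‖(√γ(A−BKC))^t‖ ≤ √(J/ℓ₀)·(1 − ℓ₀/J)^{t/2}` for all `t > 0`, where `J = J_γ(K)`. -/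
theorem stmt11
    {n m p : ℕ} (hn : 1 ≤ n) (hm : 1 ≤ m) (hp : 1 ≤ p)
    (A : Matrix (Fin n) (Fin n) ℝ) (B : Matrix (Fin n) (Fin m) ℝ) (C : Matrix (Fin p) (Fin n) ℝ)
    (Q : Matrix (Fin n) (Fin n) ℝ) (R : Matrix (Fin m) (Fin m) ℝ)
    (hQsymm : Q.IsSymm) (hRsymm : R.IsSymm)
    (ℓ₀ ℓ₁ ψ φ : ℝ) (hℓ₀ : 0 < ℓ₀) (hℓ₀₁ : ℓ₀ ≤ ℓ₁) (hψ : 1 ≤ ψ) (hφ : 1 ≤ φ)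
    (hQlb : (Q - ℓ₀ • (1 : Matrix (Fin n) (Fin n) ℝ)).PosSemidef)
    (hQub : (ℓ₁ • (1 : Matrix (Fin n) (Fin n) ℝ) - Q).PosSemidef)
    (hRlb : (R - ℓ₀ • (1 : Matrix (Fin m) (Fin m) ℝ)).PosSemidef)
    (hRub : (ℓ₁ • (1 : Matrix (Fin m) (Fin m) ℝ) - R).PosSemidef)
    (hB : spNorm B ≤ ψ) (hC : spNorm C ≤ φ)
    (γ : ℝ) (hγ : γ ∈ Set.Ioc (0 : ℝ) 1)
    (K : Matrix (Fin m) (Fin p) ℝ) (hK : inS A B C γ K) :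
    Real.sqrt γ * specRad (Acl A B C K) ≤
        Real.sqrt (1 - ℓ₀ / Jcost A B C Q R γ K) ∧
      ∀ t : ℕ, 0 < t →
        spNorm ((Real.sqrt γ • Acl A B C K) ^ t) ≤
          Real.sqrt (Jcost A B C Q R γ K / ℓ₀) *
            Real.sqrt (1 - ℓ₀ / Jcost A B C Q R γ K) ^ t := by
  have hγ0 : 0 < γ := hγ.1
  set X : Matrix (Fin n) (Fin n) ℝ := Q + Cᵀ * Kᵀ * R * K * C with hX
  have hRpsd_q : ∀ y : Fin m → ℝ, 0 ≤ y ⬝ᵥ R *ᵥ y := by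
    intro y
    have h1 := hRlb.dotProduct_mulVec_nonneg y
    simp only [star_trivial, Matrix.sub_mulVec, dotProduct_sub,
      Matrix.smul_mulVec, Matrix.one_mulVec, dotProduct_smul] at h1
    have h2 : 0 ≤ y ⬝ᵥ y := Finset.sum_nonneg fun i _ => mul_self_nonneg _
    have h3 : 0 ≤ ℓ₀ * (y ⬝ᵥ y) := mul_nonneg hℓ₀.le h2
    simp only [smul_eq_mul] at h1
    linarith
  have hqKC : ∀ x : Fin n → ℝ,
      x ⬝ᵥ (Cᵀ * Kᵀ * R * K * C) *ᵥ x = ((K * C) *ᵥ x) ⬝ᵥ R *ᵥ ((K * C) *ᵥ x) := by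
    intro x
    have h1 : Cᵀ * Kᵀ * R * K * C = (K * C)ᵀ * R * (K * C) := by
      rw [Matrix.transpose_mul]
      simp only [Matrix.mul_assoc]
    rw [h1, ← Matrix.mulVec_mulVec, ← Matrix.mulVec_mulVec, Matrix.dotProduct_mulVec x,
      Matrix.vecMul_transpose]
  have hXlb : ∀ x : Fin n → ℝ, ℓ₀ * (∑ i, (x i) ^ 2) ≤ x ⬝ᵥ X *ᵥ x := by
    intro x
    have h1 := hQlb.dotProduct_mulVec_nonneg x
    simp only [star_trivial, Matrix.sub_mulVec, dotProduct_sub,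
      Matrix.smul_mulVec, Matrix.one_mulVec, dotProduct_smul,
      smul_eq_mul] at h1
    have h2 : x ⬝ᵥ x = ∑ i, (x i) ^ 2 := by
      simp only [dotProduct]
      exact Finset.sum_congr rfl fun i _ => (sq (x i)).symm
    have h3 : ℓ₀ * (∑ i, (x i) ^ 2) ≤ x ⬝ᵥ Q *ᵥ x := by rw [← h2]; linarith
    have h4 : 0 ≤ x ⬝ᵥ (Cᵀ * Kᵀ * R * K * C) *ᵥ x := by
      rw [hqKC x]; exact hRpsd_q _
    have h5 : x ⬝ᵥ X *ᵥ x = x ⬝ᵥ Q *ᵥ x + x ⬝ᵥ (Cᵀ * Kᵀ * R * K * C) *ᵥ x := by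
      rw [hX, Matrix.add_mulVec, dotProduct_add]
    linarith
  have hXpsd : X.PosSemidef := by
    refine Matrix.PosSemidef.of_dotProduct_mulVec_nonneg ?_ ?_
    · rw [Matrix.IsHermitian, Matrix.conjTranspose_eq_transpose_of_trivial]
      rw [hX, Matrix.transpose_add, hQsymm.eq]
      congr 1
      simp only [Matrix.transpose_mul, Matrix.transpose_transpose, hRsymm.eq]
      simp only [Matrix.mul_assoc]
    · intro x
      have h0 : 0 ≤ ℓ₀ * (∑ i, (x i) ^ 2) := by positivity
      simpa using h0.trans (hXlb x)
  have hspec : Real.sqrt γ * specRad (Acl A B C K) < 1 := hK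
  exact keyLemma hn (Acl A B C K) X ℓ₀ hℓ₀ hXpsd hXlb γ hγ0 hspec
    (Jcost A B C Q R γ K) rfl
end

section
/- Under the discount-update hypotheses (γ ∈ (0,1), K ∈ S_γ with J_γ(K) > ℓ₀, Ĵ ∈ ℝ with |J_γ(K) − Ĵ| ≤ J_γ(K)/2, ζ ∈ (0,1), α = ℓ₀/(2Ĵ − ℓ₀), γ' = (1 + ζα)γ), for every t ∈ ℕ the damped closed-loop powers at the enlarged discount factor satisfy ‖(√γ'(A − BKC))^t‖ ≤ √(J_γ(K)/ℓ₀)·(1 − (1 − ζ)ℓ₀/(2Ĵ))^{t/2}. -/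
open Matrix

noncomputable section S16aux
namespace S16

def cplx {a b : ℕ} (M : Matrix (Fin a) (Fin b) ℝ) : Matrix (Fin a) (Fin b) ℂ :=
  M.map (algebraMap ℝ ℂ)

section Cx
open scoped Matrix.Norms.L2Operator

variable {a b c N : ℕ}

lemma cplx_mul (M : Matrix (Fin a) (Fin b) ℝ) (X : Matrix (Fin b) (Fin c) ℝ) :
    cplx (M * X) = cplx M * cplx X :=
  Matrix.map_mul

lemma cplx_pow (M : Matrix (Fin N) (Fin N) ℝ) (t : ℕ) : cplx (M ^ t) = cplx M ^ t := by
  induction t with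
  | zero =>
    ext i j
    simp [cplx, Matrix.one_apply, apply_ite]
  | succ t ih => rw [pow_succ, pow_succ, cplx_mul, ih]

lemma cplx_transpose (M : Matrix (Fin a) (Fin b) ℝ) : cplx Mᵀ = (cplx M)ᴴ := by
  ext i j
  simp [cplx, Matrix.conjTranspose_apply]

lemma vecNorm_mulVec_le (M : Matrix (Fin a) (Fin b) ℝ) (x : Fin b → ℝ) :
    Real.sqrt (∑ i, ((M *ᵥ x) i)^2) ≤ ‖cplx M‖ * Real.sqrt (∑ i, (x i)^2) := by
  have h := Matrix.l2_opNorm_mulVec (cplx M) ((WithLp.equiv 2 (Fin b → ℂ)).symm (fun j => (x j : ℂ)))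
  have hmv : (cplx M *ᵥ ((WithLp.equiv 2 (Fin b → ℂ)).symm (fun j => (x j : ℂ))) : Fin a → ℂ)
      = fun i => ((M *ᵥ x) i : ℂ) := by
    funext i
    show (cplx M *ᵥ (fun j => (x j : ℂ))) i = _
    simp only [cplx, Matrix.mulVec, dotProduct, Matrix.map_apply]
    push_cast
    rfl
  rw [hmv] at h
  have hl : ‖(EuclideanSpace.equiv (Fin a) ℂ).symm (fun i => ((M *ᵥ x) i : ℂ))‖
      = Real.sqrt (∑ i, ((M *ᵥ x) i)^2) := by
    rw [EuclideanSpace.norm_eq]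
    congr 1
    refine Finset.sum_congr rfl fun i _ => ?_
    simp [Complex.norm_real, sq_abs]
  have hr : ‖(WithLp.equiv 2 (Fin b → ℂ)).symm (fun j => (x j : ℂ))‖
      = Real.sqrt (∑ i, (x i)^2) := by
    rw [EuclideanSpace.norm_eq]
    congr 1
    refine Finset.sum_congr rfl fun i _ => ?_
    simp [Complex.norm_real, sq_abs]
  rw [hl, hr] at h
  exact h

lemma entry_abs_le (M : Matrix (Fin a) (Fin b) ℝ) (i : Fin a) (j : Fin b) :
    |M i j| ≤ ‖cplx M‖ := by
  classical
  have h := vecNorm_mulVec_le M (Pi.single j 1)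
  have h1 : (M *ᵥ Pi.single j 1) = fun i => M i j := by
    funext i
    simp [Matrix.mulVec_single]
  have h2 : Real.sqrt (∑ i, ((Pi.single j 1 : Fin b → ℝ) i)^2) = 1 := by
    rw [Finset.sum_eq_single j]
    · simp
    · intro k _ hk; simp [Pi.single_apply, hk]
    · simp
  rw [h1, h2, mul_one] at h
  refine le_trans ?_ h
  rw [← Real.sqrt_sq_eq_abs]
  apply Real.sqrt_le_sqrt
  exact Finset.single_le_sum (f := fun i => (M i j)^2) (fun k _ => sq_nonneg _) (Finset.mem_univ i)

lemma entry_bound (L Mq : Matrix (Fin N) (Fin N) ℝ) (t : ℕ) (i j : Fin N) :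
    |((Lᵀ)^t * Mq * L^t) i j| ≤ ‖cplx (L^t)‖ * ‖cplx Mq‖ * ‖cplx (L^t)‖ := by
  refine (entry_abs_le _ i j).trans ?_
  rw [cplx_mul, cplx_mul]
  have h1 : ‖cplx (Lᵀ ^ t)‖ = ‖cplx (L ^ t)‖ := by
    have : (Lᵀ) ^ t = (L ^ t)ᵀ := (Matrix.transpose_pow L t).symm
    rw [this, cplx_transpose, Matrix.l2_opNorm_conjTranspose]
  calc ‖cplx (Lᵀ ^ t) * cplx Mq * cplx (L ^ t)‖
      ≤ ‖cplx (Lᵀ ^ t) * cplx Mq‖ * ‖cplx (L ^ t)‖ := Matrix.l2_opNorm_mul _ _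
    _ ≤ ‖cplx (Lᵀ ^ t)‖ * ‖cplx Mq‖ * ‖cplx (L ^ t)‖ :=
        mul_le_mul_of_nonneg_right (Matrix.l2_opNorm_mul _ _) (norm_nonneg _)
    _ = ‖cplx (L ^ t)‖ * ‖cplx Mq‖ * ‖cplx (L ^ t)‖ := by rw [h1]

lemma pow_bound (hN : 1 ≤ N) (L : Matrix (Fin N) (Fin N) ℝ) {γ : ℝ} (hγ : 0 < γ)
    (h : Real.sqrt γ * specRad L < 1) :
    ∃ C s : ℝ, 0 ≤ C ∧ 0 ≤ s ∧ γ * s ^ 2 < 1 ∧ ∀ t, ‖cplx (L ^ t)‖ ≤ C * s ^ t := by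
  haveI : Nonempty (Fin N) := ⟨⟨0, hN⟩⟩
  haveI : Nontrivial (Matrix (Fin N) (Fin N) ℂ) := inferInstance
  obtain ⟨z, hz, hznorm⟩ := spectrum.exists_nnnorm_eq_spectralRadius (cplx L)
  set S : Set ℝ := {r : ℝ | ∃ μ ∈ spectrum ℂ (L.map (algebraMap ℝ ℂ)), r = ‖μ‖} with hS
  have hub : ∀ r ∈ S, r ≤ ‖cplx L‖ * ‖(1 : Matrix (Fin N) (Fin N) ℂ)‖ := by
    rintro r ⟨μ, hμ, rfl⟩
    have := spectrum.subset_closedBall_norm_mul (𝕜 := ℂ) (cplx L) hμ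
    simpa [Metric.mem_closedBall, dist_zero_right] using this
  have hbdd : BddAbove S := ⟨_, hub⟩
  have hzS : ‖z‖ ∈ S := ⟨z, hz, rfl⟩
  have hzle : ‖z‖ ≤ specRad L := le_csSup hbdd hzS
  have hsr0 : 0 ≤ specRad L := (norm_nonneg z).trans hzle
  have hsqγ : 0 < Real.sqrt γ := Real.sqrt_pos.mpr hγ
  have hlt : specRad L < (Real.sqrt γ)⁻¹ := by
    rw [inv_eq_one_div]
    exact (lt_div_iff₀' hsqγ).mpr h
  set s : ℝ := (specRad L + (Real.sqrt γ)⁻¹) / 2 with hs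
  have hρs : specRad L < s := by simp only [hs]; linarith
  have hsinv : s < (Real.sqrt γ)⁻¹ := by simp only [hs]; linarith
  have hspos : 0 < s := lt_of_le_of_lt hsr0 hρs
  have hγs : γ * s ^ 2 < 1 := by
    have h2 : s ^ 2 < ((Real.sqrt γ)⁻¹) ^ 2 := by
      apply pow_lt_pow_left₀ hsinv (le_of_lt hspos)
      norm_num
    have h3 : ((Real.sqrt γ)⁻¹) ^ 2 = γ⁻¹ := by
      rw [← Real.sqrt_inv, Real.sq_sqrt (inv_nonneg.mpr hγ.le)]
    rw [h3] at h2
    calc γ * s ^ 2 < γ * γ⁻¹ := by exact (mul_lt_mul_iff_right₀ hγ).mpr h2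
    _ = 1 := mul_inv_cancel₀ (ne_of_gt hγ)
  have hzs : ‖z‖ < s := lt_of_le_of_lt hzle hρs
  have hsrlt : spectralRadius ℂ (cplx L) < ENNReal.ofReal s := by
    rw [← hznorm, ← (ofReal_norm _).trans (enorm_eq_nnnorm _)]
    exact (ENNReal.ofReal_lt_ofReal_iff hspos).mpr hzs
  have hGel := spectrum.pow_nnnorm_pow_one_div_tendsto_nhds_spectralRadius (cplx L)
  have hev : ∀ᶠ (t : ℕ) in Filter.atTop,
      (‖cplx L ^ t‖₊ : ENNReal) ^ (1 / (t : ℝ)) < ENNReal.ofReal s :=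
    hGel.eventually_lt_const hsrlt
  obtain ⟨T₀, hT₀⟩ := Filter.eventually_atTop.mp hev
  set T := max T₀ 1 with hT
  have hTail : ∀ t, T ≤ t → ‖cplx (L ^ t)‖ ≤ s ^ t := by
    intro t ht
    have ht1 : 1 ≤ t := le_trans (le_max_right _ _) ht
    have htpos : (0 : ℝ) < t := by positivity
    have h1 := hT₀ t (le_trans (le_max_left _ _) ht)
    have h2 : ((‖cplx L ^ t‖₊ : ENNReal) ^ (1 / (t : ℝ))) ^ (t : ℝ)
        < (ENNReal.ofReal s) ^ (t : ℝ) := ENNReal.rpow_lt_rpow h1 htpos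
    rw [← ENNReal.rpow_mul, one_div, inv_mul_cancel₀ (ne_of_gt htpos), ENNReal.rpow_one] at h2
    rw [ENNReal.ofReal_rpow_of_pos hspos] at h2
    have h3 : (‖cplx L ^ t‖₊ : ENNReal) < ENNReal.ofReal (s ^ t) := by
      rw [Real.rpow_natCast] at h2; exact h2
    rw [← (ofReal_norm _).trans (enorm_eq_nnnorm _)] at h3
    have := (ENNReal.ofReal_lt_ofReal_iff (by positivity)).mp h3
    rw [cplx_pow]
    exact this.le
  have hsum0 : 0 ≤ ∑ u ∈ Finset.range T, ‖cplx (L ^ u)‖ / s ^ u :=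
    Finset.sum_nonneg fun u _ => div_nonneg (norm_nonneg _) (by positivity)
  refine ⟨1 + ∑ u ∈ Finset.range T, ‖cplx (L ^ u)‖ / s ^ u, s, by linarith, hspos.le, hγs,
    fun t => ?_⟩
  by_cases hcase : T ≤ t
  · calc ‖cplx (L ^ t)‖ ≤ s ^ t := hTail t hcase
    _ = 1 * s ^ t := (one_mul _).symm
    _ ≤ _ := mul_le_mul_of_nonneg_right (by linarith) (by positivity)
  · push_neg at hcase
    have hmem : t ∈ Finset.range T := Finset.mem_range.mpr hcase
    have hle : ‖cplx (L ^ t)‖ / s ^ t ≤ 1 + ∑ u ∈ Finset.range T, ‖cplx (L ^ u)‖ / s ^ u := by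
      have := Finset.single_le_sum (f := fun u => ‖cplx (L ^ u)‖ / s ^ u)
        (fun u _ => div_nonneg (norm_nonneg _) (by positivity)) hmem
      linarith
    calc ‖cplx (L ^ t)‖ = (‖cplx (L ^ t)‖ / s ^ t) * s ^ t := by field_simp
    _ ≤ _ := mul_le_mul_of_nonneg_right hle (by positivity)

end Cx

variable {a b N : ℕ}

lemma hasSum_entry {f : ℕ → Matrix (Fin a) (Fin b) ℝ} {P : Matrix (Fin a) (Fin b) ℝ}
    (h : HasSum f P) (i : Fin a) (j : Fin b) : HasSum (fun t => f t i j) (P i j) := by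
  have h1 := Pi.hasSum.mp h i
  exact Pi.hasSum.mp h1 j

lemma summable_of_entries {f : ℕ → Matrix (Fin a) (Fin b) ℝ}
    (h : ∀ i j, Summable fun t => f t i j) : Summable f := by
  apply Pi.summable.mpr
  intro i
  exact Pi.summable.mpr (h i)

lemma qf_expand (M : Matrix (Fin a) (Fin a) ℝ) (x : Fin a → ℝ) :
    x ⬝ᵥ (M *ᵥ x) = ∑ i, ∑ j, x i * (M i j * x j) := by
  simp [dotProduct, Matrix.mulVec, Finset.mul_sum]

lemma qf_hasSum {f : ℕ → Matrix (Fin a) (Fin a) ℝ} {P : Matrix (Fin a) (Fin a) ℝ}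
    (h : HasSum f P) (x : Fin a → ℝ) :
    HasSum (fun t => x ⬝ᵥ (f t *ᵥ x)) (x ⬝ᵥ (P *ᵥ x)) := by
  simp only [qf_expand]
  apply hasSum_sum
  intro i _
  apply hasSum_sum
  intro j _
  exact ((hasSum_entry h i j).mul_right (x j)).mul_left (x i)

lemma qf_conj (X : Matrix (Fin b) (Fin a) ℝ) (M : Matrix (Fin b) (Fin b) ℝ) (x : Fin a → ℝ) :
    x ⬝ᵥ ((Xᵀ * M * X) *ᵥ x) = (X *ᵥ x) ⬝ᵥ (M *ᵥ (X *ᵥ x)) := by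
  rw [← Matrix.mulVec_mulVec, ← Matrix.mulVec_mulVec, Matrix.dotProduct_mulVec,
    Matrix.vecMul_transpose]

lemma qf_smul (c : ℝ) (M : Matrix (Fin a) (Fin a) ℝ) (x : Fin a → ℝ) :
    x ⬝ᵥ ((c • M) *ᵥ x) = c * (x ⬝ᵥ (M *ᵥ x)) := by
  rw [Matrix.smul_mulVec, dotProduct_smul, smul_eq_mul]

lemma qf_add (M M' : Matrix (Fin a) (Fin a) ℝ) (x : Fin a → ℝ) :
    x ⬝ᵥ ((M + M') *ᵥ x) = x ⬝ᵥ (M *ᵥ x) + x ⬝ᵥ (M' *ᵥ x) := by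
  rw [Matrix.add_mulVec, dotProduct_add]

lemma dot_self_nonneg (x : Fin a → ℝ) : 0 ≤ x ⬝ᵥ x :=
  Finset.sum_nonneg fun i _ => mul_self_nonneg _

lemma dot_self_eq (x : Fin a → ℝ) : x ⬝ᵥ x = ∑ i, (x i)^2 :=
  Finset.sum_congr rfl fun i _ => (sq (x i)).symm

open scoped Matrix.Norms.L2Operator MatrixOrder in
lemma qf_le_trace {P : Matrix (Fin N) (Fin N) ℝ} (hP : P.PosSemidef) (x : Fin N → ℝ) :
    x ⬝ᵥ (P *ᵥ x) ≤ P.trace * (x ⬝ᵥ x) := by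
  obtain ⟨B, rfl⟩ : ∃ B : Matrix (Fin N) (Fin N) ℝ, P = Bᴴ * B := CStarAlgebra.nonneg_iff_eq_star_mul_self.mp hP.nonneg
  have hBt : Bᴴ = Bᵀ := by
    ext i j; simp [Matrix.conjTranspose_apply]
  rw [hBt]
  have h1 : x ⬝ᵥ ((Bᵀ * B) *ᵥ x) = (B *ᵥ x) ⬝ᵥ (B *ᵥ x) := by
    rw [← Matrix.mulVec_mulVec, Matrix.dotProduct_mulVec, Matrix.vecMul_transpose]
  rw [h1]
  have h2 : (Bᵀ * B).trace = ∑ i, ∑ j, (B i j)^2 := by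
    rw [Matrix.trace]
    simp only [Matrix.diag_apply, Matrix.mul_apply, Matrix.transpose_apply]
    rw [Finset.sum_comm]
    exact Finset.sum_congr rfl fun i _ => Finset.sum_congr rfl fun j _ => (sq (B i j)).symm ▸ by ring
  rw [h2]
  have h3 : ∀ i, ((B *ᵥ x) i) * ((B *ᵥ x) i) ≤ (∑ j, (B i j)^2) * (x ⬝ᵥ x) := by
    intro i
    have := Finset.sum_mul_sq_le_sq_mul_sq Finset.univ (fun j => B i j) x
    calc ((B *ᵥ x) i) * ((B *ᵥ x) i) = (∑ j, B i j * x j)^2 := by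
          simp [Matrix.mulVec, dotProduct, sq]
    _ ≤ (∑ j, (B i j)^2) * (∑ j, (x j)^2) := this
    _ = (∑ j, (B i j)^2) * (x ⬝ᵥ x) := by rw [dot_self_eq x]
  calc (B *ᵥ x) ⬝ᵥ (B *ᵥ x) = ∑ i, ((B *ᵥ x) i) * ((B *ᵥ x) i) := rfl
  _ ≤ ∑ i, (∑ j, (B i j)^2) * (x ⬝ᵥ x) := Finset.sum_le_sum fun i _ => h3 i
  _ = (∑ i, ∑ j, (B i j)^2) * (x ⬝ᵥ x) := by rw [Finset.sum_mul]

lemma sqrt_pow {c : ℝ} (hc : 0 ≤ c) (t : ℕ) : Real.sqrt (c ^ t) = Real.sqrt c ^ t := by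
  induction t with
  | zero => simp
  | succ t ih => rw [pow_succ, pow_succ, Real.sqrt_mul (by positivity), ih]

lemma spNorm_le_of {M : Matrix (Fin a) (Fin b) ℝ} {D : ℝ} (hD : 0 ≤ D)
    (h : ∀ x : Fin b → ℝ, Real.sqrt (∑ i, ((M *ᵥ x) i)^2) ≤ D * Real.sqrt (∑ i, (x i)^2)) :
    spNorm M ≤ D := by
  refine ContinuousLinearMap.opNorm_le_bound _ hD fun x => ?_
  have hx := h ((WithLp.equiv 2 (Fin b → ℝ)) x)
  have h1 : ‖LinearMap.toContinuousLinearMap (Matrix.toEuclideanLin M) x‖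
      = Real.sqrt (∑ i, ((M *ᵥ ((WithLp.equiv 2 (Fin b → ℝ)) x)) i)^2) := by
    rw [LinearMap.coe_toContinuousLinearMap']
    rw [Matrix.toEuclideanLin_apply]
    rw [EuclideanSpace.norm_eq]
    congr 1
    refine Finset.sum_congr rfl fun i _ => ?_
    simp [Real.norm_eq_abs, sq_abs]
  have h2 : ‖x‖ = Real.sqrt (∑ i, (((WithLp.equiv 2 (Fin b → ℝ)) x) i)^2) := by
    rw [EuclideanSpace.norm_eq]
    refine congrArg _ (Finset.sum_congr rfl fun i _ => ?_)
    simp [Real.norm_eq_abs, sq_abs]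
  rw [h1, h2]
  exact hx


section Cx2
open scoped Matrix.Norms.L2Operator

lemma term_bound {N : ℕ} (hN : 1 ≤ N) (L Mq : Matrix (Fin N) (Fin N) ℝ) {γ : ℝ} (hγ : 0 < γ)
    (h : Real.sqrt γ * specRad L < 1) :
    ∃ D r : ℝ, 0 ≤ D ∧ 0 ≤ r ∧ r < 1 ∧
      ∀ t (i j : Fin N), |(γ^t • ((Lᵀ)^t * Mq * L^t)) i j| ≤ D * r^t := by
  obtain ⟨Cb, s, hCb0, hs0, hγs, hbound⟩ := pow_bound hN L hγ h
  refine ⟨Cb * ‖cplx Mq‖ * Cb, γ * s^2, by positivity, by positivity, hγs, ?_⟩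
  intro t i j
  have h1 := entry_bound L Mq t i j
  have h2 := hbound t
  have hn0 : (0:ℝ) ≤ ‖cplx (L^t)‖ := norm_nonneg _
  calc |(γ^t • ((Lᵀ)^t * Mq * L^t)) i j| = γ^t * |((Lᵀ)^t * Mq * L^t) i j| := by
        simp [abs_mul, abs_of_nonneg (pow_nonneg hγ.le t)]
  _ ≤ γ^t * (‖cplx (L^t)‖ * ‖cplx Mq‖ * ‖cplx (L^t)‖) :=
        mul_le_mul_of_nonneg_left h1 (pow_nonneg hγ.le t)
  _ ≤ γ^t * ((Cb * s^t) * ‖cplx Mq‖ * (Cb * s^t)) := by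
        apply mul_le_mul_of_nonneg_left _ (pow_nonneg hγ.le t)
        gcongr <;> positivity
  _ = (Cb * ‖cplx Mq‖ * Cb) * (γ * s^2)^t := by ring

end Cx2

set_option maxHeartbeats 1000000 in
theorem main_aux {N : ℕ} (hN : 1 ≤ N) (L Mq : Matrix (Fin N) (Fin N) ℝ)
    (hMqsymm : Mqᵀ = Mq) {ℓ₀ : ℝ} (hℓ₀ : 0 < ℓ₀)
    (hMq_lb : ∀ x : Fin N → ℝ, ℓ₀ * (x ⬝ᵥ x) ≤ x ⬝ᵥ (Mq *ᵥ x))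
    {γ : ℝ} (hγ0 : 0 < γ) (hγρ : Real.sqrt γ * specRad L < 1)
    {J : ℝ} (hJdef : J = (∑' t : ℕ, γ ^ t • ((Lᵀ) ^ t * Mq * L ^ t)).trace)
    (hJℓ : ℓ₀ < J)
    {Jhat : ℝ} (hJhat : |J - Jhat| ≤ J / 2)
    {ζ : ℝ} (hζ : 0 < ζ) (hζ1 : ζ < 1)
    {γ' : ℝ} (hγ' : γ' = (1 + ζ * (ℓ₀ / (2 * Jhat - ℓ₀))) * γ) :
    ∀ t : ℕ, spNorm ((Real.sqrt γ' • L) ^ t) ≤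
      Real.sqrt (J / ℓ₀) * Real.sqrt (1 - (1 - ζ) * ℓ₀ / (2 * Jhat)) ^ t := by
  obtain ⟨D, r, hD0, hr0, hr1, hDb⟩ := term_bound hN L Mq hγ0 hγρ
  set f : ℕ → Matrix (Fin N) (Fin N) ℝ := fun t => γ ^ t • ((Lᵀ) ^ t * Mq * L ^ t) with hf
  have hDb' : ∀ t (i j : Fin N), |f t i j| ≤ D * r ^ t := fun t i j => hDb t i j
  have hsum : Summable f := by
    apply summable_of_entries
    intro i j
    have hg : Summable (fun t => D * r^t) := (summable_geometric_of_lt_one hr0 hr1).mul_left D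
    exact Summable.of_abs
      (hg.of_nonneg_of_le (fun t => abs_nonneg _) (fun t => hDb' t i j))
  set P : Matrix (Fin N) (Fin N) ℝ := ∑' t, f t with hPdef
  have hP : HasSum f P := hsum.hasSum
  -- Lyapunov identity
  have hf0 : f 0 = Mq := by
    show γ ^ 0 • ((Lᵀ) ^ 0 * Mq * L ^ 0) = Mq
    simp
  have hfs : ∀ t, f (t+1) = γ • (Lᵀ * f t * L) := by
    intro t
    show γ ^ (t+1) • ((Lᵀ) ^ (t+1) * Mq * L ^ (t+1))
        = γ • (Lᵀ * (γ ^ t • ((Lᵀ) ^ t * Mq * L ^ t)) * L)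
    rw [Matrix.mul_smul, Matrix.smul_mul, smul_smul, ← pow_succ' γ]
    congr 1
    rw [pow_succ L, pow_succ' Lᵀ]
    simp only [Matrix.mul_assoc]
  have hmap : HasSum (fun t => γ • (Lᵀ * f t * L)) (γ • (Lᵀ * P * L)) := by
    have hc : Continuous (fun X : Matrix (Fin N) (Fin N) ℝ => γ • (Lᵀ * X * L)) :=
      ((continuous_const.matrix_mul continuous_id).matrix_mul continuous_const).const_smul γ
    have hadd : ∀ X Y : Matrix (Fin N) (Fin N) ℝ,
        γ • (Lᵀ * (X + Y) * L) = γ • (Lᵀ * X * L) + γ • (Lᵀ * Y * L) := fun X Y => by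
      rw [Matrix.mul_add, Matrix.add_mul, smul_add]
    have hφcoe : ⇑(AddMonoidHom.mk' (fun X : Matrix (Fin N) (Fin N) ℝ => γ • (Lᵀ * X * L)) hadd)
        = fun X : Matrix (Fin N) (Fin N) ℝ => γ • (Lᵀ * X * L) := rfl
    have hmap0 := hP.map (AddMonoidHom.mk' (fun X : Matrix (Fin N) (Fin N) ℝ =>
      γ • (Lᵀ * X * L)) hadd) (by rw [hφcoe]; exact hc)
    rw [hφcoe] at hmap0
    exact hmap0
  have hLyap : P = Mq + γ • (Lᵀ * P * L) := by
    have h1 := Summable.tsum_eq_zero_add hsum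
    rw [hf0] at h1
    simp only [hfs] at h1
    rw [hmap.tsum_eq] at h1
    exact h1
  -- quadratic form facts
  have hq_term : ∀ t (x : Fin N → ℝ),
      x ⬝ᵥ (f t *ᵥ x) = γ^t * ((L^t *ᵥ x) ⬝ᵥ (Mq *ᵥ (L^t *ᵥ x))) := by
    intro t x
    show x ⬝ᵥ ((γ ^ t • ((Lᵀ) ^ t * Mq * L ^ t)) *ᵥ x) = _
    rw [qf_smul]
    congr 1
    have ht : (Lᵀ)^t = (L^t)ᵀ := (Matrix.transpose_pow L t).symm
    rw [ht, qf_conj]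
  have hMq0 : ∀ x : Fin N → ℝ, 0 ≤ x ⬝ᵥ (Mq *ᵥ x) := fun x =>
    le_trans (mul_nonneg hℓ₀.le (dot_self_nonneg x)) (hMq_lb x)
  have hPpsd : ∀ x : Fin N → ℝ, 0 ≤ x ⬝ᵥ (P *ᵥ x) := by
    intro x
    refine hasSum_le (fun t => ?_) hasSum_zero (qf_hasSum hP x)
    rw [hq_term]
    exact mul_nonneg (pow_nonneg hγ0.le t) (hMq0 _)
  have hPt : Pᵀ = P := by
    rw [hPdef, Matrix.transpose_tsum]
    congr 1
    funext t
    show (γ ^ t • ((Lᵀ) ^ t * Mq * L ^ t))ᵀ = γ ^ t • ((Lᵀ) ^ t * Mq * L ^ t)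
    simp [Matrix.transpose_smul, Matrix.transpose_mul, Matrix.transpose_pow,
      Matrix.transpose_transpose, hMqsymm, Matrix.mul_assoc]
  have hPposSemidef : P.PosSemidef := by
    refine Matrix.PosSemidef.of_dotProduct_mulVec_nonneg ?_ ?_
    · show Pᴴ = P
      have hC : Pᴴ = Pᵀ := by ext i j; simp [Matrix.conjTranspose_apply]
      rw [hC, hPt]
    · intro x
      simpa using hPpsd x
  have hPtr : ∀ x : Fin N → ℝ, x ⬝ᵥ (P *ᵥ x) ≤ J * (x ⬝ᵥ x) := by
    intro x
    have := qf_le_trace hPposSemidef x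
    rw [← hJdef] at this
    exact this
  -- scalar facts
  have hJpos : 0 < J := hℓ₀.trans hJℓ
  have habs := abs_le.mp hJhat
  have hJhat_ge : J / 2 ≤ Jhat := by linarith [habs.2]
  have hJhatpos : 0 < Jhat := by linarith
  have h2J : 0 < 2 * Jhat - ℓ₀ := by linarith
  set cn : ℝ := 1 - (1 - ζ) * ℓ₀ / (2 * Jhat) with hcn
  have hcn_pos : 0 < cn := by
    have h1 : (1 - ζ) * ℓ₀ < 2 * Jhat := by nlinarith
    have h2 : (1 - ζ) * ℓ₀ / (2 * Jhat) < 1 := (div_lt_one (by linarith)).mpr h1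
    simp only [hcn]
    linarith
  have hfac_pos : 0 < 1 + ζ * (ℓ₀ / (2 * Jhat - ℓ₀)) := by
    have := mul_pos hζ (div_pos hℓ₀ h2J)
    linarith
  have hγ'pos : 0 < γ' := by rw [hγ']; exact mul_pos hfac_pos hγ0
  have hkey : (1 + ζ * (ℓ₀ / (2 * Jhat - ℓ₀))) * (1 - ℓ₀ / J) ≤ cn := by
    have hmono : 1 - ℓ₀ / J ≤ 1 - ℓ₀ / (2 * Jhat) := by
      have := div_le_div_of_nonneg_left hℓ₀.le hJpos (by linarith : J ≤ 2 * Jhat)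
      linarith
    have hident : (1 + ζ * (ℓ₀ / (2 * Jhat - ℓ₀))) * (1 - ℓ₀ / (2 * Jhat)) = cn := by
      rw [hcn]
      have hA : (2 : ℝ) * Jhat - ℓ₀ ≠ 0 := ne_of_gt h2J
      have hB : (2 : ℝ) * Jhat ≠ 0 := by positivity
      field_simp
      ring
    calc (1 + ζ * (ℓ₀ / (2 * Jhat - ℓ₀))) * (1 - ℓ₀ / J)
        ≤ (1 + ζ * (ℓ₀ / (2 * Jhat - ℓ₀))) * (1 - ℓ₀ / (2 * Jhat)) :=
          mul_le_mul_of_nonneg_left hmono hfac_pos.le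
    _ = cn := hident
  -- Lyapunov in quadratic form
  have hLyapQ : ∀ y : Fin N → ℝ,
      y ⬝ᵥ (P *ᵥ y) = y ⬝ᵥ (Mq *ᵥ y) + γ * ((L *ᵥ y) ⬝ᵥ (P *ᵥ (L *ᵥ y))) := by
    intro y
    conv_lhs => rw [hLyap]
    rw [qf_add, qf_smul, qf_conj]
  have hstep : ∀ y : Fin N → ℝ,
      γ' * ((L *ᵥ y) ⬝ᵥ (P *ᵥ (L *ᵥ y))) ≤ cn * (y ⬝ᵥ (P *ᵥ y)) := by
    intro y
    have h2 := hLyapQ y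
    have h3 := hMq_lb y
    have h4 : ℓ₀ / J * (y ⬝ᵥ (P *ᵥ y)) ≤ ℓ₀ * (y ⬝ᵥ y) := by
      rw [div_mul_eq_mul_div, div_le_iff₀ hJpos]
      have := hPtr y
      nlinarith
    have h1 : γ * ((L *ᵥ y) ⬝ᵥ (P *ᵥ (L *ᵥ y))) ≤ (1 - ℓ₀ / J) * (y ⬝ᵥ (P *ᵥ y)) := by
      have e : (1 - ℓ₀ / J) * (y ⬝ᵥ (P *ᵥ y))
          = y ⬝ᵥ (P *ᵥ y) - ℓ₀ / J * (y ⬝ᵥ (P *ᵥ y)) := by ring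
      rw [e]
      linarith
    calc γ' * ((L *ᵥ y) ⬝ᵥ (P *ᵥ (L *ᵥ y)))
        = (1 + ζ * (ℓ₀ / (2 * Jhat - ℓ₀))) * (γ * ((L *ᵥ y) ⬝ᵥ (P *ᵥ (L *ᵥ y)))) := by
          rw [hγ']; ring
    _ ≤ (1 + ζ * (ℓ₀ / (2 * Jhat - ℓ₀))) * ((1 - ℓ₀ / J) * (y ⬝ᵥ (P *ᵥ y))) :=
          mul_le_mul_of_nonneg_left h1 hfac_pos.le
    _ = ((1 + ζ * (ℓ₀ / (2 * Jhat - ℓ₀))) * (1 - ℓ₀ / J)) * (y ⬝ᵥ (P *ᵥ y)) := by ring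
    _ ≤ cn * (y ⬝ᵥ (P *ᵥ y)) := mul_le_mul_of_nonneg_right hkey (hPpsd y)
  -- iterate
  have hiter : ∀ t (x : Fin N → ℝ),
      γ'^t * ((L^t *ᵥ x) ⬝ᵥ (P *ᵥ (L^t *ᵥ x))) ≤ cn^t * (x ⬝ᵥ (P *ᵥ x)) := by
    intro t
    induction t with
    | zero => intro x; simp [Matrix.one_mulVec]
    | succ t ih =>
      intro x
      have hmv : L^(t+1) *ᵥ x = L^t *ᵥ (L *ᵥ x) := by
        rw [Matrix.mulVec_mulVec, ← pow_succ]
      calc γ'^(t+1) * ((L^(t+1) *ᵥ x) ⬝ᵥ (P *ᵥ (L^(t+1) *ᵥ x)))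
          = γ' * (γ'^t * ((L^t *ᵥ (L *ᵥ x)) ⬝ᵥ (P *ᵥ (L^t *ᵥ (L *ᵥ x))))) := by
            rw [hmv]; ring
      _ ≤ γ' * (cn^t * ((L *ᵥ x) ⬝ᵥ (P *ᵥ (L *ᵥ x)))) :=
            mul_le_mul_of_nonneg_left (ih (L *ᵥ x)) hγ'pos.le
      _ = cn^t * (γ' * ((L *ᵥ x) ⬝ᵥ (P *ᵥ (L *ᵥ x)))) := by ring
      _ ≤ cn^t * (cn * (x ⬝ᵥ (P *ᵥ x))) :=
            mul_le_mul_of_nonneg_left (hstep x) (pow_nonneg hcn_pos.le t)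
      _ = cn^(t+1) * (x ⬝ᵥ (P *ᵥ x)) := by ring
  -- conclusion
  intro t
  refine spNorm_le_of (D := Real.sqrt (J / ℓ₀) * Real.sqrt cn ^ t) (by positivity) ?_
  intro x
  have hsm : ((Real.sqrt γ' • L)^t) *ᵥ x = (Real.sqrt γ')^t • (L^t *ᵥ x) := by
    rw [smul_pow, Matrix.smul_mulVec]
  have hsum_eq : ∑ i, ((((Real.sqrt γ' • L)^t) *ᵥ x) i)^2
      = γ'^t * ∑ i, ((L^t *ᵥ x) i)^2 := by
    rw [hsm]
    have : ∀ i, (((Real.sqrt γ')^t • (L^t *ᵥ x)) i)^2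
        = γ'^t * ((L^t *ᵥ x) i)^2 := by
      intro i
      have : ((Real.sqrt γ')^t)^2 = γ'^t := by
        rw [← pow_mul, mul_comm, pow_mul, Real.sq_sqrt hγ'pos.le]
      calc (((Real.sqrt γ')^t • (L^t *ᵥ x)) i)^2
          = ((Real.sqrt γ')^t)^2 * ((L^t *ᵥ x) i)^2 := by
            simp [Pi.smul_apply, smul_eq_mul, mul_pow]
      _ = γ'^t * ((L^t *ᵥ x) i)^2 := by rw [this]
    rw [Finset.sum_congr rfl (fun i _ => this i), ← Finset.mul_sum]
  have h1 : ℓ₀ * ((L^t *ᵥ x) ⬝ᵥ (L^t *ᵥ x)) ≤ (L^t *ᵥ x) ⬝ᵥ (P *ᵥ (L^t *ᵥ x)) := by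
    have hA := hMq_lb (L^t *ᵥ x)
    have hB := hLyapQ (L^t *ᵥ x)
    have hC : 0 ≤ γ * ((L *ᵥ (L^t *ᵥ x)) ⬝ᵥ (P *ᵥ (L *ᵥ (L^t *ᵥ x)))) :=
      mul_nonneg hγ0.le (hPpsd _)
    linarith
  have hfin : ∑ i, ((((Real.sqrt γ' • L)^t) *ᵥ x) i)^2
      ≤ J / ℓ₀ * cn^t * ∑ i, (x i)^2 := by
    rw [hsum_eq]
    have e : J / ℓ₀ * cn^t * (∑ i, (x i)^2) = (J * cn^t * ∑ i, (x i)^2) / ℓ₀ := by ring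
    rw [e, le_div_iff₀ hℓ₀]
    calc γ'^t * (∑ i, ((L^t *ᵥ x) i)^2) * ℓ₀
        = γ'^t * (ℓ₀ * ((L^t *ᵥ x) ⬝ᵥ (L^t *ᵥ x))) := by rw [dot_self_eq]; ring
    _ ≤ γ'^t * ((L^t *ᵥ x) ⬝ᵥ (P *ᵥ (L^t *ᵥ x))) :=
        mul_le_mul_of_nonneg_left h1 (pow_nonneg hγ'pos.le t)
    _ ≤ cn^t * (x ⬝ᵥ (P *ᵥ x)) := hiter t x
    _ ≤ cn^t * (J * (x ⬝ᵥ x)) :=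
        mul_le_mul_of_nonneg_left (hPtr x) (pow_nonneg hcn_pos.le t)
    _ = J * cn^t * ∑ i, (x i)^2 := by rw [dot_self_eq]; ring
  have hsq := Real.sqrt_le_sqrt hfin
  have heq : Real.sqrt (J / ℓ₀ * cn^t * ∑ i, (x i)^2)
      = (Real.sqrt (J / ℓ₀) * Real.sqrt cn ^ t) * Real.sqrt (∑ i, (x i)^2) := by
    rw [Real.sqrt_mul (by positivity), Real.sqrt_mul (by positivity), sqrt_pow hcn_pos.le]
  rw [heq] at hsq
  exact hsq

end S16

end S16aux

/-- for every `t`,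
`‖(√γ'(A − BKC))^t‖ ≤ √(J_γ(K)/ℓ₀)·(1 − (1 − ζ)ℓ₀/(2Jhat))^{t/2}`. -/
theorem stmt16
    {n m p : ℕ} (hn : 1 ≤ n) (hm : 1 ≤ m) (hp : 1 ≤ p)
    (A : Matrix (Fin n) (Fin n) ℝ) (B : Matrix (Fin n) (Fin m) ℝ) (C : Matrix (Fin p) (Fin n) ℝ)
    (Q : Matrix (Fin n) (Fin n) ℝ) (R : Matrix (Fin m) (Fin m) ℝ)
    (hQsymm : Q.IsSymm) (hRsymm : R.IsSymm)
    (ℓ₀ ℓ₁ ψ φ : ℝ) (hℓ₀ : 0 < ℓ₀) (hℓ₀₁ : ℓ₀ ≤ ℓ₁) (hψ : 1 ≤ ψ) (hφ : 1 ≤ φ)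
    (hQlb : (Q - ℓ₀ • (1 : Matrix (Fin n) (Fin n) ℝ)).PosSemidef)
    (hQub : (ℓ₁ • (1 : Matrix (Fin n) (Fin n) ℝ) - Q).PosSemidef)
    (hRlb : (R - ℓ₀ • (1 : Matrix (Fin m) (Fin m) ℝ)).PosSemidef)
    (hRub : (ℓ₁ • (1 : Matrix (Fin m) (Fin m) ℝ) - R).PosSemidef)
    (hB : spNorm B ≤ ψ) (hC : spNorm C ≤ φ)
    (γ : ℝ) (hγ : γ ∈ Set.Ioo (0 : ℝ) 1)
    (K : Matrix (Fin m) (Fin p) ℝ) (hK : inS A B C γ K)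
    (hJ : ℓ₀ < Jcost A B C Q R γ K)
    (Jhat : ℝ) (hJhat : |Jcost A B C Q R γ K - Jhat| ≤ Jcost A B C Q R γ K / 2)
    (ζ : ℝ) (hζ : ζ ∈ Set.Ioo (0 : ℝ) 1)
    (γ' : ℝ) (hγ' : γ' = (1 + ζ * (ℓ₀ / (2 * Jhat - ℓ₀))) * γ) :
    ∀ t : ℕ,
      spNorm ((Real.sqrt γ' • Acl A B C K) ^ t) ≤
        Real.sqrt (Jcost A B C Q R γ K / ℓ₀) *
          Real.sqrt (1 - (1 - ζ) * ℓ₀ / (2 * Jhat)) ^ t := by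
  have hMqsymm : (Q + Cᵀ * Kᵀ * R * K * C)ᵀ = Q + Cᵀ * Kᵀ * R * K * C := by
    have h2 : (Cᵀ * Kᵀ * R * K * C)ᵀ = Cᵀ * Kᵀ * R * K * C := by
      simp [Matrix.transpose_mul, Matrix.transpose_transpose, hRsymm.eq, Matrix.mul_assoc]
    rw [Matrix.transpose_add, hQsymm.eq, h2]
  have hMq_lb : ∀ x : Fin n → ℝ,
      ℓ₀ * (x ⬝ᵥ x) ≤ x ⬝ᵥ ((Q + Cᵀ * Kᵀ * R * K * C) *ᵥ x) := by
    intro x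
    have hQx : ℓ₀ * (x ⬝ᵥ x) ≤ x ⬝ᵥ (Q *ᵥ x) := by
      have h0 := hQlb.dotProduct_mulVec_nonneg x
      simp only [star_trivial] at h0
      rw [Matrix.sub_mulVec, dotProduct_sub, S16.qf_smul, Matrix.one_mulVec] at h0
      linarith
    have hRx : 0 ≤ x ⬝ᵥ ((Cᵀ * Kᵀ * R * K * C) *ᵥ x) := by
      have e : Cᵀ * Kᵀ * R * K * C = (K * C)ᵀ * R * (K * C) := by
        rw [Matrix.transpose_mul]
        simp [Matrix.mul_assoc]
      rw [e, S16.qf_conj]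
      have h0 := hRlb.dotProduct_mulVec_nonneg ((K * C) *ᵥ x)
      simp only [star_trivial] at h0
      rw [Matrix.sub_mulVec, dotProduct_sub, S16.qf_smul, Matrix.one_mulVec] at h0
      have hy := S16.dot_self_nonneg ((K * C) *ᵥ x)
      nlinarith
    rw [S16.qf_add]
    linarith
  exact S16.main_aux hn (Acl A B C K) (Q + Cᵀ * Kᵀ * R * K * C) hMqsymm hℓ₀ hMq_lb hγ.1 hK
    rfl hJ hJhat hζ.1 hζ.2 hγ'
end
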